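/- arXiv:2202.11787 — 6 statements merged into one kernel-verified Lean document; each statement's English description precedes it below -/
import Mathlib

section
/- In the ring of symmetric functions, the chromatic symmetric function of the star graph on n+1 vertices satisfies st_{n+1} = Σ_{r=0}^{n} (−1)^r · C(n,r) · p_{r+1} · p₁^{n−r}, where p_k are the power sum symmetric functions. -/
/-- A coloring is proper if the two endpoints of each edge get distinct colors. -/
def IsProperColoring {V E C : Type*} (ends : E → Sym2 V) (κ : V → C) : Prop :=
  ∀ f : E, ¬ (Sym2.map κ (ends f)).IsDiag

/-- The chromatic symmetric function of a multigraph, as a formal power series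
in `x₀, x₁, …`: the coefficient of `∏ xᵢ^{d i}` is the number of proper
colorings `κ : V → ℕ` with exactly `d i` vertices of each color `i`. -/
noncomputable def csf {V E : Type*} [Fintype V] (ends : E → Sym2 V) :
    MvPowerSeries ℕ ℚ :=
  fun d => (Set.ncard {κ : V → ℕ | IsProperColoring ends κ ∧
    ∀ i : ℕ, d i = ∑ v : V, if κ v = i then 1 else 0} : ℚ)

/-- The power sum symmetric function `p_k = ∑_{i} x_i^k` as a power series. -/
noncomputable def pk (k : ℕ) : MvPowerSeries ℕ ℚ :=
  Set.indicator {d : ℕ →₀ ℕ | ∃ i : ℕ, d = Finsupp.single i k} (fun _ => (1 : ℚ))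

/-- The star graph `St_{n+1}`: center `0`, adjacent to the `n` leaves. -/
def starEnds (n : ℕ) : Fin n → Sym2 (Fin (n + 1)) :=
  fun i => s((0 : Fin (n + 1)), i.succ)

/-! ### Auxiliary counting machinery -/

/-- The generating series counting fibers of `u`. -/
noncomputable def cser {A : Type*} (u : A → (ℕ →₀ ℕ)) : MvPowerSeries ℕ ℚ :=
  fun d => (Set.ncard {a | u a = d} : ℚ)

lemma cser_congr {A B : Type*} (e : A ≃ B) (u : A → (ℕ →₀ ℕ)) (v : B → (ℕ →₀ ℕ))
    (h : ∀ a, u a = v (e a)) : cser u = cser v := by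
  funext d
  have : {a | u a = d}.ncard = {b | v b = d}.ncard :=
    Nat.card_congr (e.subtypeEquiv fun a => by simp [h a])
  simp [cser, this]

lemma cser_mul {A B : Type*} (u : A → (ℕ →₀ ℕ)) (v : B → (ℕ →₀ ℕ))
    (hu : ∀ d, {a | u a = d}.Finite) (hv : ∀ d, {b | v b = d}.Finite) :
    cser u * cser v = cser (fun p : A × B => u p.1 + v p.2) := by
  classical
  funext d
  have hmul : (cser u * cser v) d
      = ∑ q ∈ Finset.HasAntidiagonal.antidiagonal d, cser u q.1 * cser v q.2 :=
    MvPowerSeries.coeff_mul d (cser u) (cser v)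
  have hfin : {p : A × B | u p.1 + v p.2 = d}.Finite := by
    have hsub : {p : A × B | u p.1 + v p.2 = d} ⊆
        ⋃ q ∈ (Finset.HasAntidiagonal.antidiagonal d : Finset _), {a | u a = q.1} ×ˢ {b | v b = q.2} := by
      rintro ⟨a, b⟩ hp
      simp only [Set.mem_setOf_eq] at hp
      refine Set.mem_biUnion (?_ : (u a, v b) ∈ Finset.HasAntidiagonal.antidiagonal d) ?_
      · simp [Finset.HasAntidiagonal.mem_antidiagonal, hp]
      · exact ⟨rfl, rfl⟩
    exact ((Finset.HasAntidiagonal.antidiagonal d).finite_toSet.biUnion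
      (fun q _ => (hu q.1).prod (hv q.2))).subset hsub
  have hT : hfin.toFinset = (Finset.HasAntidiagonal.antidiagonal d).biUnion
      (fun q => ((hu q.1).toFinset ×ˢ (hv q.2).toFinset)) := by
    ext ⟨a, b⟩
    simp only [Set.Finite.mem_toFinset, Set.mem_setOf_eq, Finset.mem_biUnion,
      Finset.mem_product, Finset.HasAntidiagonal.mem_antidiagonal]
    constructor
    · intro h; exact ⟨(u a, v b), h, by simp, by simp⟩
    · rintro ⟨q, hq, h1, h2⟩
      rw [h1, h2]; exact hq
  have hcard : hfin.toFinset.card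
      = ∑ q ∈ Finset.HasAntidiagonal.antidiagonal d, (hu q.1).toFinset.card * (hv q.2).toFinset.card := by
    rw [hT, Finset.card_biUnion]
    · exact Finset.sum_congr rfl fun q _ => by rw [Finset.card_product]
    · rintro q hq q' hq' hne
      rw [Function.onFun, Finset.disjoint_left]
      rintro ⟨a, b⟩ h1 h2
      simp only [Finset.mem_product, Set.Finite.mem_toFinset, Set.mem_setOf_eq] at h1 h2
      exact hne (by rw [Prod.ext_iff]; exact ⟨h1.1 ▸ h2.1.symm ▸ rfl, h1.2 ▸ h2.2.symm ▸ rfl⟩)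
  show (cser u * cser v) d = _
  rw [hmul]
  unfold cser
  rw [Set.ncard_eq_toFinset_card _ hfin, hcard]
  push_cast
  refine Finset.sum_congr rfl fun q _ => ?_
  rw [Set.ncard_eq_toFinset_card _ (hu q.1), Set.ncard_eq_toFinset_card _ (hv q.2)]

lemma single_fiber_finite {k : ℕ} (hk : k ≠ 0) (d : ℕ →₀ ℕ) :
    {i : ℕ | Finsupp.single i k = d}.Finite := by
  apply Set.Subsingleton.finite
  intro i hi j hj
  exact Finsupp.single_left_injective hk (hi.trans hj.symm)

lemma pk_eq {k : ℕ} (hk : k ≠ 0) : pk k = cser (fun i : ℕ => Finsupp.single i k) := by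
  funext d
  by_cases h : ∃ i : ℕ, d = Finsupp.single i k
  · obtain ⟨i, rfl⟩ := h
    have hset : {j : ℕ | Finsupp.single j k = Finsupp.single i k} = {i} := by
      ext j
      simp only [Set.mem_setOf_eq, Set.mem_singleton_iff]
      exact ⟨fun hj => Finsupp.single_left_injective hk hj, fun hj => by rw [hj]⟩
    have hmem : (Finsupp.single i k) ∈ {d : ℕ →₀ ℕ | ∃ i : ℕ, d = Finsupp.single i k} := ⟨i, rfl⟩
    simp [pk, cser, hset, Set.indicator_of_mem hmem]
  · have hset : {j : ℕ | Finsupp.single j k = d} = ∅ := by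
      ext j
      simp only [Set.mem_setOf_eq, Set.mem_empty_iff_false, iff_false]
      exact fun hj => h ⟨j, hj.symm⟩
    simp [pk, cser, hset, Set.indicator_of_notMem, h]

lemma fun_fiber_finite {V : Type*} [Fintype V] (d : ℕ →₀ ℕ) :
    {κ : V → ℕ | ∑ v, Finsupp.single (κ v) 1 = d}.Finite := by
  apply Set.Finite.subset (Set.Finite.pi (fun _ : V => d.support.finite_toSet))
  intro κ hκ
  simp only [Set.mem_setOf_eq] at hκ
  rw [Set.mem_pi]
  intro v _
  simp only [Finset.coe_sort_coe, Finset.mem_coe, Finsupp.mem_support_iff]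
  have hd : d (κ v) = ∑ w : V, (Finsupp.single (κ w) 1) (κ v) := by
    rw [← hκ, Finsupp.finset_sum_apply]
  have hle : (1 : ℕ) ≤ d (κ v) := by
    rw [hd]
    calc (1 : ℕ) = (Finsupp.single (κ v) 1) (κ v) := by simp
    _ ≤ ∑ w : V, (Finsupp.single (κ w) 1) (κ v) :=
      Finset.single_le_sum (f := fun w => (Finsupp.single (κ w) 1) (κ v))
        (fun w _ => Nat.zero_le _) (Finset.mem_univ v)
  omega

lemma pk_one_pow (m : ℕ) :
    pk 1 ^ m = cser (fun g : Fin m → ℕ => ∑ j, Finsupp.single (g j) 1) := by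
  induction m with
  | zero =>
    funext d
    rw [pow_zero]
    have h1 : (1 : MvPowerSeries ℕ ℚ) d = if d = 0 then 1 else 0 := by
      have : (1 : MvPowerSeries ℕ ℚ) d = MvPowerSeries.coeff d 1 := rfl
      rw [this, MvPowerSeries.coeff_one]
    rw [h1]
    unfold cser
    by_cases hd : d = 0
    · subst hd
      have : {g : Fin 0 → ℕ | ∑ j, Finsupp.single (g j) 1 = 0} = Set.univ := by
        ext g; simp
      rw [this, if_pos rfl, Set.ncard_univ]
      simp [Nat.card_unique]
    · have : {g : Fin 0 → ℕ | ∑ j, Finsupp.single (g j) 1 = d} = ∅ := by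
        ext g; simp [eq_comm, hd]
      rw [this, if_neg hd]
      simp
  | succ m ih =>
    rw [pow_succ', ih, pk_eq one_ne_zero,
      cser_mul _ _ (single_fiber_finite one_ne_zero) (fun d => fun_fiber_finite d)]
    apply cser_congr (Fin.consEquiv (fun _ : Fin (m+1) => ℕ))
    rintro ⟨i, g⟩
    show _ = ∑ j, Finsupp.single (Fin.cons i g j) 1
    rw [Fin.sum_univ_succ]
    simp

lemma proper_star {n : ℕ} (κ : Fin (n+1) → ℕ) :
    IsProperColoring (starEnds n) κ ↔ ∀ j : Fin n, κ j.succ ≠ κ 0 := by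
  unfold IsProperColoring starEnds
  simp [Sym2.map_pair_eq, Sym2.mk_isDiag_iff, eq_comm]

lemma wt_split {n : ℕ} (t : Finset (Fin n)) (ec : Fin (n - t.card) ≃ {j // j ∈ tᶜ})
    (κ : Fin (n+1) → ℕ) (hκ : ∀ j ∈ t, κ j.succ = κ 0) :
    ∑ v : Fin (n+1), Finsupp.single (κ v) 1
      = Finsupp.single (κ 0) (t.card + 1)
        + ∑ j : Fin (n - t.card), Finsupp.single (κ (ec j).1.succ) 1 := by
  rw [Fin.sum_univ_succ]
  have hsplit : ∑ j : Fin n, Finsupp.single (κ j.succ) 1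
      = ∑ j ∈ t, Finsupp.single (κ j.succ) 1 + ∑ j ∈ tᶜ, Finsupp.single (κ j.succ) 1 :=
    (Finset.sum_add_sum_compl t _).symm
  have h1 : ∑ j ∈ t, Finsupp.single (κ j.succ) 1 = Finsupp.single (κ 0) t.card := by
    rw [Finset.sum_congr rfl (fun j hj => by rw [hκ j hj]), Finset.sum_const,
      Finsupp.smul_single]
    simp
  have h2 : ∑ j ∈ tᶜ, Finsupp.single (κ j.succ) 1
      = ∑ j : Fin (n - t.card), Finsupp.single (κ (ec j).1.succ) 1 := by
    rw [← Finset.sum_coe_sort, ← Equiv.sum_comp ec (fun x => Finsupp.single (κ x.1.succ) 1)]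
  rw [hsplit, h1, h2, ← add_assoc, ← Finsupp.single_add]
  congr 2
  omega

lemma subset_count {n : ℕ} (d : ℕ →₀ ℕ) (t : Finset (Fin n)) :
    {κ : Fin (n+1) → ℕ | (∀ j ∈ t, κ j.succ = κ 0) ∧ ∑ v, Finsupp.single (κ v) 1 = d}.ncard
      = {p : ℕ × (Fin (n - t.card) → ℕ) |
          Finsupp.single p.1 (t.card + 1) + ∑ j, Finsupp.single (p.2 j) 1 = d}.ncard := by
  classical
  have hc : (tᶜ).card = n - t.card := by
    rw [Finset.card_compl, Fintype.card_fin]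
  let ec : Fin (n - t.card) ≃ {j // j ∈ tᶜ} := (finCongr hc.symm).trans tᶜ.equivFin.symm
  let bw : (ℕ × (Fin (n - t.card) → ℕ)) → (Fin (n+1) → ℕ) := fun p =>
    Fin.cases p.1 (fun j => if h : j ∈ t then p.1 else p.2 (ec.symm ⟨j, Finset.mem_compl.mpr h⟩))
  have bw0 : ∀ p, bw p 0 = p.1 := fun p => rfl
  have bwt : ∀ p, ∀ j ∈ t, bw p j.succ = p.1 := by
    intro p j hj
    simp only [bw, Fin.cases_succ, dif_pos hj]
  have bwc : ∀ p (j : Fin (n - t.card)), bw p ((ec j).1.succ) = p.2 j := by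
    intro p j
    have hmem : (ec j).1 ∈ tᶜ := (ec j).2
    simp only [bw, Fin.cases_succ, dif_neg (Finset.mem_compl.mp hmem)]
    simp only [Subtype.coe_eta, Equiv.symm_apply_apply]
  have bwcond : ∀ p, ∀ j ∈ t, bw p j.succ = bw p 0 :=
    fun p j hj => (bwt p j hj).trans (bw0 p).symm
  apply Nat.card_congr
  refine
    { toFun := fun κ => ⟨(κ.1 0, fun j => κ.1 ((ec j).1.succ)),
        (wt_split t ec κ.1 κ.2.1).symm.trans κ.2.2⟩
      invFun := fun p => ⟨bw p.1, bwcond p.1, ?_⟩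
      left_inv := ?_
      right_inv := ?_ }
  · rw [wt_split t ec (bw p.1) (bwcond p.1), bw0,
      Finset.sum_congr rfl (fun j _ => by rw [bwc p.1 j])]
    exact p.2
  · rintro ⟨κ, hκ1, hκ2⟩
    apply Subtype.ext
    funext v
    induction v using Fin.cases with
    | zero => rfl
    | succ j =>
      show bw (κ 0, fun j => κ ((ec j).1.succ)) j.succ = κ j.succ
      by_cases hj : j ∈ t
      · rw [bwt _ j hj]
        exact (hκ1 j hj).symm
      · have hmem : j ∈ tᶜ := Finset.mem_compl.mpr hj
        simp only [bw, Fin.cases_succ, dif_neg hj]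
        exact congrArg (fun x => κ x.1.succ) (ec.apply_symm_apply ⟨j, hmem⟩)
  · rintro ⟨p, hp⟩
    apply Subtype.ext
    refine Prod.ext (bw0 p) (funext fun j => bwc p j)

/-- `st_{n+1} = ∑_{r=0}^{n} (-1)^r C(n,r) p_{r+1} p₁^{n-r}`: the power sum
expansion of the chromatic symmetric function of the star on `n+1` vertices. -/
theorem star_csf_powersum (n : ℕ) :
    csf (starEnds n) =
      ∑ r ∈ Finset.range (n + 1),
        ((-1 : ℚ) ^ r * (n.choose r : ℚ)) • (pk (r + 1) * pk 1 ^ (n - r)) := by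
  classical
  funext d
  -- Right-hand side as counts
  have hR : (∑ r ∈ Finset.range (n + 1),
        ((-1 : ℚ) ^ r * (n.choose r : ℚ)) • (pk (r + 1) * pk 1 ^ (n - r))) d
      = ∑ r ∈ Finset.range (n + 1), ((-1 : ℚ) ^ r * (n.choose r : ℚ)) *
          ({p : ℕ × (Fin (n - r) → ℕ) |
            Finsupp.single p.1 (r + 1) + ∑ j, Finsupp.single (p.2 j) 1 = d}.ncard : ℚ) := by
    have hprod : ∀ r : ℕ, pk (r+1) * pk 1 ^ (n - r)
        = cser (fun p : ℕ × (Fin (n - r) → ℕ) =>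
            Finsupp.single p.1 (r+1) + ∑ j, Finsupp.single (p.2 j) 1) := by
      intro r
      rw [pk_eq (Nat.succ_ne_zero r), pk_one_pow,
        cser_mul _ _ (single_fiber_finite (Nat.succ_ne_zero r)) (fun d => fun_fiber_finite d)]
    have : (∑ r ∈ Finset.range (n + 1),
        ((-1 : ℚ) ^ r * (n.choose r : ℚ)) • (pk (r + 1) * pk 1 ^ (n - r))) d
        = MvPowerSeries.coeff d (∑ r ∈ Finset.range (n + 1),
            ((-1 : ℚ) ^ r * (n.choose r : ℚ)) • (pk (r + 1) * pk 1 ^ (n - r))) := rfl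
    rw [this, map_sum]
    refine Finset.sum_congr rfl fun r _ => ?_
    rw [LinearMap.map_smul, smul_eq_mul, hprod r]
    rfl
  rw [hR]
  -- Left-hand side as a count
  have hL : csf (starEnds n) d
      = ({κ : Fin (n+1) → ℕ | (∀ j : Fin n, κ j.succ ≠ κ 0)
          ∧ ∑ v, Finsupp.single (κ v) 1 = d}.ncard : ℚ) := by
    unfold csf
    congr 2
    ext κ
    simp only [Set.mem_setOf_eq, proper_star]
    refine and_congr Iff.rfl ?_
    have key : ∀ i, (∑ v, Finsupp.single (κ v) 1) i = ∑ v, if κ v = i then 1 else 0 := by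
      intro i
      rw [Finsupp.finset_sum_apply]
      exact Finset.sum_congr rfl fun v _ => Finsupp.single_apply
    constructor
    · intro h
      ext i
      rw [key i, ← h i]
    · intro h i
      rw [← h, key i]
  rw [hL]
  -- Inclusion–exclusion
  set F := (fun_fiber_finite (V := Fin (n+1)) d).toFinset with hF
  have step1 : ({κ : Fin (n+1) → ℕ | (∀ j : Fin n, κ j.succ ≠ κ 0)
      ∧ ∑ v, Finsupp.single (κ v) 1 = d}.ncard : ℚ)
      = ∑ κ ∈ F, ∏ j : Fin n, (if κ j.succ = κ 0 then (0:ℚ) else 1) := by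
    have hseteq : {κ : Fin (n+1) → ℕ | (∀ j : Fin n, κ j.succ ≠ κ 0)
        ∧ ∑ v, Finsupp.single (κ v) 1 = d}
        = ↑(F.filter (fun κ => ∀ j : Fin n, κ j.succ ≠ κ 0)) := by
      ext κ
      simp only [Set.mem_setOf_eq, Finset.coe_filter, Set.Finite.mem_toFinset, hF,
        Set.mem_setOf_eq]
      tauto
    rw [hseteq, Set.ncard_coe_finset]
    rw [← Finset.sum_boole]
    refine Finset.sum_congr rfl fun κ _ => ?_
    by_cases h : ∀ j : Fin n, κ j.succ ≠ κ 0
    · rw [if_pos h, Finset.prod_congr rfl (fun j _ => if_neg (h j)), Finset.prod_const_one]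
    · push_neg at h
      obtain ⟨j, hj⟩ := h
      rw [if_neg (by push_neg; exact ⟨j, hj⟩)]
      refine (Finset.prod_eq_zero (Finset.mem_univ j) ?_).symm
      exact if_pos hj
  rw [step1]
  have step2 : ∀ κ : Fin (n+1) → ℕ,
      ∏ j : Fin n, (if κ j.succ = κ 0 then (0:ℚ) else 1)
      = ∑ t ∈ (Finset.univ : Finset (Fin n)).powerset,
          (-1 : ℚ) ^ t.card * (if ∀ j ∈ t, κ j.succ = κ 0 then 1 else 0) := by
    intro κ
    have hfac : ∀ j : Fin n, (if κ j.succ = κ 0 then (0:ℚ) else 1)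
        = (-1) * (if κ j.succ = κ 0 then 1 else 0) + 1 := by
      intro j; by_cases h : κ j.succ = κ 0 <;> simp [h]
    rw [Finset.prod_congr rfl (fun j _ => hfac j), Finset.prod_add]
    refine Finset.sum_congr rfl fun t _ => ?_
    rw [Finset.prod_const_one, mul_one, Finset.prod_mul_distrib, Finset.prod_const]
    congr 1
    by_cases h : ∀ j ∈ t, κ j.succ = κ 0
    · rw [if_pos h, Finset.prod_congr rfl (fun j hj => if_pos (h j hj)),
        Finset.prod_const_one]
    · rw [if_neg h]
      push_neg at h
      obtain ⟨j, hjt, hne⟩ := h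
      exact Finset.prod_eq_zero hjt (if_neg hne)
  rw [Finset.sum_congr rfl (fun κ _ => step2 κ), Finset.sum_comm]
  have step3 : ∀ t : Finset (Fin n),
      ∑ κ ∈ F, (-1 : ℚ) ^ t.card * (if ∀ j ∈ t, κ j.succ = κ 0 then 1 else 0)
      = (-1 : ℚ) ^ t.card *
          ({p : ℕ × (Fin (n - t.card) → ℕ) |
            Finsupp.single p.1 (t.card + 1) + ∑ j, Finsupp.single (p.2 j) 1 = d}.ncard : ℚ) := by
    intro t
    rw [← Finset.mul_sum]
    congr 1
    rw [Finset.sum_boole]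
    have hseteq : {κ : Fin (n+1) → ℕ | (∀ j ∈ t, κ j.succ = κ 0)
        ∧ ∑ v, Finsupp.single (κ v) 1 = d}
        = ↑(F.filter (fun κ => ∀ j ∈ t, κ j.succ = κ 0)) := by
      ext κ
      simp only [Set.mem_setOf_eq, Finset.coe_filter, Set.Finite.mem_toFinset, hF,
        Set.mem_setOf_eq]
      tauto
    rw [← subset_count d t, hseteq, Set.ncard_coe_finset]
  rw [Finset.sum_congr rfl (fun t _ => step3 t)]
  -- group by cardinality
  rw [Finset.powerset_card_disjiUnion, Finset.sum_disjiUnion _ _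
    ((Finset.univ : Finset (Fin n)).pairwise_disjoint_powersetCard.set_pairwise _)]
  refine Finset.sum_congr (by rw [Finset.card_fin]) fun r hr => ?_
  rw [Finset.sum_congr rfl (fun t ht => by rw [(Finset.mem_powersetCard.mp ht).2]),
    Finset.sum_const, Finset.card_powersetCard, Finset.card_fin, nsmul_eq_mul]
  ring
end

section
/- The linear map on homogeneous symmetric functions of degree n determined by sending p_λ to st_λ (for each partition λ of n) is an involution; equivalently, p_{n+1} = Σ_{r=0}^{n} (−1)^r · C(n,r) · st_{r+1} · st₁^{n−r} given that st_{n+1} = Σ_{r=0}^{n} (−1)^r · C(n,r) · p_{r+1} · p₁^{n−r}. -/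
lemma key_coeff (n s : ℕ) (hs : s ≤ n) :
    ∑ r ∈ Finset.range (n + 1), (-1 : ℤ) ^ (r + s) * (n.choose r) * (r.choose s) =
      if s = n then 1 else 0 := by
  have h1 : ∑ r ∈ Finset.range (n + 1), (-1 : ℤ) ^ (r + s) * (n.choose r) * (r.choose s)
      = ∑ r ∈ Finset.Ico s (n + 1), (-1 : ℤ) ^ (r + s) * (n.choose r) * (r.choose s) := by
    rw [Finset.range_eq_Ico]
    refine (Finset.sum_subset (Finset.Ico_subset_Ico (Nat.zero_le _) le_rfl) ?_).symm
    intro r hr hr'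
    simp only [Finset.mem_Ico] at hr hr'
    have : r < s := by omega
    rw [Nat.choose_eq_zero_of_lt this]
    ring
  rw [h1, Finset.sum_Ico_eq_sum_range]
  have h2 : ∀ t ∈ Finset.range (n + 1 - s),
      (-1 : ℤ) ^ (s + t + s) * (n.choose (s + t)) * ((s + t).choose s)
      = (n.choose s : ℤ) * ((-1 : ℤ) ^ t * ((n - s).choose t)) := by
    intro t ht
    simp only [Finset.mem_range] at ht
    have hkn : s + t ≤ n := by omega
    have := Nat.choose_mul (n := n) (Nat.le_add_right s t)
    have hc : (n.choose (s + t)) * ((s + t).choose s) = n.choose s * (n - s).choose t := by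
      simpa using this
    have hsgn : (-1 : ℤ) ^ (s + t + s) = (-1 : ℤ) ^ t := by
      rw [show s + t + s = t + 2 * s by ring, pow_add, pow_mul]
      simp
    rw [mul_assoc, ← Nat.cast_mul, hc, hsgn]
    push_cast
    ring
  rw [Finset.sum_congr rfl h2, ← Finset.mul_sum]
  have h3 : n + 1 - s = (n - s) + 1 := by omega
  rw [h3, Int.alternating_sum_range_choose]
  rcases eq_or_ne s n with rfl | hne
  · simp
  · have : n - s ≠ 0 := by omega
    simp [this, hne]

/-- The linear map sending `p_λ` to `st_λ` is an involution: in any commutative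
ring, if `st_{n+1} = ∑_{r=0}^{n} (-1)^r C(n,r) p_{r+1} p₁^{n-r}` for all `n`,
then `p_{n+1} = ∑_{r=0}^{n} (-1)^r C(n,r) st_{r+1} st₁^{n-r}` for all `n`. -/
theorem p_st_involution {A : Type*} [CommRing A] (p st : ℕ → A)
    (h : ∀ n : ℕ, st (n + 1) = ∑ r ∈ Finset.range (n + 1),
        (-1 : A) ^ r * (n.choose r : A) * (p (r + 1) * p 1 ^ (n - r))) :
    ∀ n : ℕ, p (n + 1) = ∑ r ∈ Finset.range (n + 1),
        (-1 : A) ^ r * (n.choose r : A) * (st (r + 1) * st 1 ^ (n - r)) := by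
  have hst1 : st 1 = p 1 := by simpa using h 0
  intro n
  -- Expand st (r+1) using h and st 1 using hst1
  have step1 : ∑ r ∈ Finset.range (n + 1),
      (-1 : A) ^ r * (n.choose r : A) * (st (r + 1) * st 1 ^ (n - r))
      = ∑ r ∈ Finset.range (n + 1), ∑ s ∈ Finset.range (n + 1),
        ((-1 : A) ^ (r + s) * ((n.choose r : A) * (r.choose s : A))) *
          (p (s + 1) * p 1 ^ (n - s)) := by
    refine Finset.sum_congr rfl fun r hr => ?_
    simp only [Finset.mem_range] at hr
    rw [h r, hst1, Finset.sum_mul, Finset.mul_sum]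
    -- inner sum over range (r+1) extended to range (n+1): extra terms have choose = 0
    rw [← Finset.sum_subset (Finset.range_subset_range.mpr (by omega : r + 1 ≤ n + 1))
      (by
        intro s hs hs'
        simp only [Finset.mem_range] at hs hs'
        rw [Nat.choose_eq_zero_of_lt (by omega : r < s)]
        push_cast
        ring)]
    refine Finset.sum_congr rfl fun s hs => ?_
    simp only [Finset.mem_range] at hs
    rcases le_or_gt s r with hsr | hsr
    · have hpow : p 1 ^ (r - s) * p 1 ^ (n - r) = p 1 ^ (n - s) := by
        rw [← pow_add]
        congr 1
        omega
      rw [pow_add]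
      calc (-1 : A) ^ r * (n.choose r : A) * ((-1 : A) ^ s * (r.choose s : A) *
              (p (s + 1) * p 1 ^ (r - s)) * p 1 ^ (n - r))
          = (-1 : A) ^ r * (-1 : A) ^ s * ((n.choose r : A) * (r.choose s : A)) *
              (p (s + 1) * (p 1 ^ (r - s) * p 1 ^ (n - r))) := by ring
        _ = _ := by rw [hpow]
    · rw [Nat.choose_eq_zero_of_lt hsr]
      push_cast
      ring
  rw [step1, Finset.sum_comm]
  have step2 : ∀ s ∈ Finset.range (n + 1),
      ∑ r ∈ Finset.range (n + 1),
        ((-1 : A) ^ (r + s) * ((n.choose r : A) * (r.choose s : A))) *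
          (p (s + 1) * p 1 ^ (n - s))
      = (if s = n then (1 : A) else 0) * (p (s + 1) * p 1 ^ (n - s)) := by
    intro s hs
    simp only [Finset.mem_range] at hs
    rw [← Finset.sum_mul]
    congr 1
    have := key_coeff n s (by omega)
    have hcast := congrArg (fun z : ℤ => (z : A)) this
    push_cast at hcast
    rw [← hcast]
    exact Finset.sum_congr rfl fun i _ => by ring
  rw [Finset.sum_congr rfl step2]
  simp only [ite_mul, one_mul, zero_mul]
  rw [Finset.sum_ite_eq' (Finset.range (n + 1)) n (fun s => p (s + 1) * p 1 ^ (n - s))]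
  simp
end

section
/- For any graph G on n vertices, the chromatic symmetric function satisfies X_G = Σ_{A ⊆ E(G)} (−1)^{|A|} p_{λ(A)}, where λ(A) is the partition of n recording the sizes of the connected components of the spanning subgraph (V(G), A). -/
/-- The setoid whose classes are the connected components of the spanning
subgraph of a multigraph with edge set `A`. -/
def compSetoid {V E : Type*} (ends : E → Sym2 V) (A : Set E) : Setoid V :=
  Relation.EqvGen.setoid (fun x y => ∃ f ∈ A, ends f = s(x, y))

open Classical in
lemma pk_apply (k : ℕ) (μ : ℕ →₀ ℕ) :
    pk k μ = if ∃ i : ℕ, μ = Finsupp.single i k then 1 else 0 := by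
  classical
  simp [pk, Set.indicator_apply, Set.mem_setOf_eq]

/-- The set of colorings with prescribed color counts is finite. -/
lemma counts_finite {V : Type*} [Fintype V] (d : ℕ →₀ ℕ) :
    {κ : V → ℕ | ∀ i : ℕ, d i = ∑ v : V, if κ v = i then 1 else 0}.Finite := by
  classical
  apply Set.Finite.subset (Set.Finite.pi (t := fun _ : V => (d.support : Set ℕ))
    (fun _ => d.support.finite_toSet))
  intro κ hκ
  simp only [Set.mem_pi, Set.mem_univ, forall_true_left]
  intro v
  simp only [Finset.mem_coe, Finsupp.mem_support_iff]
  intro h0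
  have := hκ (κ v)
  rw [h0] at this
  have := (Finset.sum_eq_zero_iff.mp this.symm) v (Finset.mem_univ v)
  simp at this

/-- Constancy on the equivalence closure is the same as constancy on the relation. -/
lemma const_eqvGen_iff {V : Type*} (r : V → V → Prop) (κ : V → ℕ) :
    (∀ x y : V, Relation.EqvGen r x y → κ x = κ y) ↔ ∀ x y : V, r x y → κ x = κ y := by
  constructor
  · exact fun h x y hr => h x y (Relation.EqvGen.rel x y hr)
  · intro h x y hxy
    induction hxy with
    | rel a b h' => exact h a b h'
    | refl a => rfl
    | symm a b _ ih => exact ih.symm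
    | trans a b c _ _ ih1 ih2 => exact ih1.trans ih2

/-- Key counting identity relating sums of single Finsupps over components
to color counts. -/
lemma sum_single_card_eq_iff {V : Type*} [Fintype V] (s : Setoid V)
    [Fintype (Quotient s)] (I : Quotient s → ℕ) (d : ℕ →₀ ℕ) :
    (∑ c : Quotient s,
        Finsupp.single (I c) (Nat.card {x : V // Quotient.mk s x = c})) = d ↔
      ∀ j : ℕ, d j = ∑ v : V, if I (Quotient.mk s v) = j then 1 else 0 := by
  classical
  have h : ∀ j : ℕ,
      (∑ c : Quotient s,
        Finsupp.single (I c) (Nat.card {x : V // Quotient.mk s x = c})) j =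
      ∑ v : V, if I (Quotient.mk s v) = j then 1 else 0 := by
    intro j
    rw [Finsupp.finset_sum_apply]
    rw [← Fintype.sum_fiberwise (fun v : V => Quotient.mk s v)
      (fun v : V => if I (Quotient.mk s v) = j then 1 else 0)]
    apply Finset.sum_congr rfl
    intro c _
    have hv : ∀ v : {x : V // Quotient.mk s x = c},
        I (Quotient.mk s v.1) = I c := fun v => by rw [v.2]
    rw [Finsupp.single_apply]
    simp_rw [hv]
    split_ifs with hc
    · simp [Nat.card_eq_fintype_card]
    · simp
  rw [Finsupp.ext_iff]
  exact forall_congr' fun j => by rw [h j, eq_comm]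

/-- The coefficient of the product of power sums over the classes of a setoid
counts colorings constant on classes with the given color counts. -/
lemma finprod_pk_apply {V : Type*} [Fintype V] (s : Setoid V) (d : ℕ →₀ ℕ) :
    (∏ᶠ c : Quotient s, pk (Nat.card {x : V // Quotient.mk s x = c})) d =
      ({κ : V → ℕ | (∀ x y : V, s.r x y → κ x = κ y) ∧
        ∀ i : ℕ, d i = ∑ v : V, if κ v = i then 1 else 0}.ncard : ℚ) := by
  classical
  haveI : Fintype (Quotient s) := Fintype.ofFinite _
  set m : Quotient s → ℕ := fun c => Nat.card {x : V // Quotient.mk s x = c} with hm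
  have hmpos : ∀ c, m c ≠ 0 := by
    intro c
    haveI : Nonempty {x : V // Quotient.mk s x = c} := ⟨⟨c.out, Quotient.out_eq c⟩⟩
    exact Nat.card_pos.ne'
  rw [finprod_eq_prod_of_fintype]
  have hfin : {κ : V → ℕ | (∀ x y : V, s.r x y → κ x = κ y) ∧
      ∀ i : ℕ, d i = ∑ v : V, if κ v = i then 1 else 0}.Finite :=
    (counts_finite d).subset (fun κ hκ => hκ.2)
  rw [Set.ncard_eq_toFinset_card _ hfin]
  have h1 : (∏ c : Quotient s, pk (m c)) d =
      MvPowerSeries.coeff d (∏ c : Quotient s, pk (m c)) := rfl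
  rw [h1, MvPowerSeries.coeff_prod]
  simp_rw [MvPowerSeries.coeff_apply, pk_apply, Fintype.prod_boole, Finset.sum_boole]
  congr 1
  -- now a bijection between Finsupps in the antidiagonal with all values singles
  -- and colorings constant on classes with the right counts
  set F := (Finset.univ.finsuppAntidiag d).filter
    (fun l : Quotient s →₀ (ℕ →₀ ℕ) => ∀ c, ∃ i, l c = Finsupp.single i (m c)) with hF
  -- the choice of color for each class
  set Ic : (Quotient s →₀ (ℕ →₀ ℕ)) → Quotient s → ℕ := fun l c =>
    if h : ∃ i, l c = Finsupp.single i (m c) then h.choose else 0 with hIc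
  have hIc_spec : ∀ l ∈ F, ∀ c, l c = Finsupp.single (Ic l c) (m c) := by
    intro l hl c
    have h := (Finset.mem_filter.mp hl).2 c
    simp only [hIc, dif_pos h]
    exact h.choose_spec
  have key : F.card = hfin.toFinset.card := by
    apply Finset.card_bij (fun l _ => fun v : V => Ic l (Quotient.mk s v))
    · -- maps into the target
      intro l hl
      rw [Set.Finite.mem_toFinset]
      constructor
      · intro x y hxy
        simp only [Quotient.sound hxy]
      · have hsum : (∑ c : Quotient s, Finsupp.single (Ic l c) (m c)) = d := by
          have hmem := (Finset.mem_filter.mp hl).1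
          rw [Finset.mem_finsuppAntidiag] at hmem
          rw [← hmem.1]
          exact Finset.sum_congr rfl fun c _ => (hIc_spec l hl c).symm
        exact (sum_single_card_eq_iff s (Ic l) d).mp hsum
    · -- injectivity
      intro l1 hl1 l2 hl2 h
      have hI : Ic l1 = Ic l2 := by
        funext c
        have := congrFun h c.out
        simpa [Quotient.out_eq] using this
      ext c j
      rw [hIc_spec l1 hl1 c, hIc_spec l2 hl2 c, hI]
    · -- surjectivity
      intro κ hκ
      rw [Set.Finite.mem_toFinset] at hκ
      obtain ⟨hconst, hcount⟩ := hκ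
      refine ⟨Finsupp.equivFunOnFinite.symm
        (fun c : Quotient s => Finsupp.single (κ c.out) (m c)), ?_, ?_⟩
      · have hl : ∀ c : Quotient s,
            (Finsupp.equivFunOnFinite.symm
              (fun c : Quotient s => Finsupp.single (κ c.out) (m c))) c =
              Finsupp.single (κ c.out) (m c) := fun c => rfl
        rw [hF, Finset.mem_filter]
        constructor
        · rw [Finset.mem_finsuppAntidiag]
          refine ⟨?_, Finset.subset_univ _⟩
          simp_rw [hl]
          apply (sum_single_card_eq_iff s (fun c => κ c.out) d).mpr
          intro j
          have hrep : ∀ v : V, κ (Quotient.mk s v).out = κ v := by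
            intro v
            exact hconst _ _ (Quotient.exact (Quotient.out_eq (Quotient.mk s v)))
          simp_rw [hrep]
          exact hcount j
        · intro c
          exact ⟨κ c.out, hl c⟩
      · funext v
        set l := Finsupp.equivFunOnFinite.symm
          (fun c : Quotient s => Finsupp.single (κ c.out) (m c)) with hldef
        have h1 : ∃ i, l (Quotient.mk s v) = Finsupp.single i (m (Quotient.mk s v)) :=
          ⟨κ (Quotient.mk s v).out, rfl⟩
        have h2 : Ic l (Quotient.mk s v) = κ (Quotient.mk s v).out := by
          simp only [hIc, dif_pos h1]
          have h3 : l (Quotient.mk s v) = Finsupp.single (κ (Quotient.mk s v).out)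
            (m (Quotient.mk s v)) := rfl
          have h4 : (Finsupp.single h1.choose (m (Quotient.mk s v)) : ℕ →₀ ℕ) =
              Finsupp.single (κ (Quotient.mk s v).out) (m (Quotient.mk s v)) :=
            h1.choose_spec.symm.trans h3
          exact (Finsupp.single_left_inj (hmpos _)).mp h4
        rw [h2]
        exact hconst _ _ (Quotient.exact (Quotient.out_eq (Quotient.mk s v)))
  rw [key]
  congr 1
  ext κ
  simp [Set.Finite.mem_toFinset]
/-- Stanley's power sum expansion:
`X_G = ∑_{A ⊆ E} (-1)^{|A|} p_{λ(A)}`, where `λ(A)` records the sizes of the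
connected components of the spanning subgraph with edge set `A`. -/
theorem csf_powersum_expansion {V E : Type*} [Fintype V] [Fintype E]
    (ends : E → Sym2 V) :
    csf ends =
      ∑ A : Finset E, ((-1 : ℚ) ^ A.card) •
        ∏ᶠ c : Quotient (compSetoid ends (↑A : Set E)),
          pk (Nat.card {x : V // Quotient.mk (compSetoid ends ↑A) x = c}) := by
  classical
  funext d
  have happ : (∑ A : Finset E, ((-1 : ℚ) ^ A.card) •
      ∏ᶠ c : Quotient (compSetoid ends (↑A : Set E)),
        pk (Nat.card {x : V // Quotient.mk (compSetoid ends ↑A) x = c})) d =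
      ∑ A : Finset E, ((-1 : ℚ) ^ A.card) *
        ((∏ᶠ c : Quotient (compSetoid ends (↑A : Set E)),
          pk (Nat.card {x : V // Quotient.mk (compSetoid ends ↑A) x = c})) d) := by
    have h := map_sum (MvPowerSeries.coeff d)
      (fun A : Finset E => ((-1 : ℚ) ^ A.card) •
        ∏ᶠ c : Quotient (compSetoid ends (↑A : Set E)),
          pk (Nat.card {x : V // Quotient.mk (compSetoid ends ↑A) x = c})) Finset.univ
    rw [MvPowerSeries.coeff_apply] at h
    rw [h]
    exact Finset.sum_congr rfl fun A _ => by
      rw [map_smul, smul_eq_mul, MvPowerSeries.coeff_apply]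
  rw [happ]
  set T := (counts_finite (V := V) d).toFinset with hT
  set M : (V → ℕ) → Finset E := fun κ =>
    Finset.univ.filter (fun f => (Sym2.map κ (ends f)).IsDiag) with hM
  have hcard : ∀ (p : (V → ℕ) → Prop) (inst : DecidablePred p),
      {κ : V → ℕ | p κ ∧ ∀ i : ℕ, d i = ∑ v : V, if κ v = i then 1 else 0}.ncard
        = (@Finset.filter _ p inst T).card := by
    intro p inst
    rw [← Set.ncard_coe_finset]
    congr 1
    ext κ
    simp [hT, Set.Finite.mem_toFinset, and_comm]
  have hL : csf ends d = ((T.filter (fun κ => IsProperColoring ends κ)).card : ℚ) := by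
    simp only [csf]
    norm_cast
    exact hcard _ _
  rw [hL]
  have hA : ∀ A : Finset E,
      ((∏ᶠ c : Quotient (compSetoid ends (↑A : Set E)),
        pk (Nat.card {x : V // Quotient.mk (compSetoid ends ↑A) x = c})) d)
        = ((T.filter (fun κ => A ⊆ M κ)).card : ℚ) := by
    intro A
    rw [finprod_pk_apply]
    have hset : {κ : V → ℕ | (∀ x y : V, (compSetoid ends (↑A : Set E)).r x y → κ x = κ y) ∧
        ∀ i : ℕ, d i = ∑ v : V, if κ v = i then 1 else 0}
        = {κ : V → ℕ | (A ⊆ M κ) ∧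
            ∀ i : ℕ, d i = ∑ v : V, if κ v = i then 1 else 0} := by
      ext κ
      simp only [Set.mem_setOf_eq, and_congr_left_iff]
      intro _
      rw [show ((compSetoid ends (↑A : Set E)).r) =
        Relation.EqvGen (fun x y => ∃ f ∈ (↑A : Set E), ends f = s(x, y)) from rfl]
      rw [const_eqvGen_iff]
      constructor
      · intro h
        intro f hf
        rw [hM]
        simp only [Finset.mem_filter, Finset.mem_univ, true_and]
        obtain ⟨⟨x, y⟩, hxy⟩ := Quot.exists_rep (ends f)
        have hxy' : ends f = s(x, y) := hxy.symm
        rw [hxy', Sym2.map_pair_eq, Sym2.mk_isDiag_iff]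
        exact h x y ⟨f, hf, hxy'⟩
      · rintro h x y ⟨f, hf, hxy⟩
        have hmem : f ∈ M κ := h hf
        rw [hM] at hmem
        simp only [Finset.mem_filter, Finset.mem_univ, true_and] at hmem
        rw [hxy, Sym2.map_pair_eq, Sym2.mk_isDiag_iff] at hmem
        exact hmem
    rw [hset]
    norm_cast
    exact hcard _ _
  simp_rw [hA]
  have step : ∀ A : Finset E,
      ((-1 : ℚ) ^ A.card) * ((T.filter (fun κ => A ⊆ M κ)).card : ℚ)
      = ∑ κ ∈ T, if A ⊆ M κ then ((-1 : ℚ) ^ A.card) else 0 := by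
    intro A
    rw [← Finset.sum_filter, Finset.sum_const, nsmul_eq_mul, mul_comm]
  simp_rw [step]
  rw [Finset.sum_comm]
  have inner : ∀ κ : V → ℕ,
      (∑ A : Finset E, if A ⊆ M κ then ((-1 : ℚ) ^ A.card) else 0)
      = if IsProperColoring ends κ then (1 : ℚ) else 0 := by
    intro κ
    have h1 : ∀ A : Finset E, (A ⊆ M κ) = (A ∈ (M κ).powerset) := by
      simp [Finset.mem_powerset]
    simp_rw [h1]
    rw [Finset.sum_ite_mem, Finset.univ_inter]
    have h2 : (∑ A ∈ (M κ).powerset, ((-1 : ℚ) ^ A.card)) =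
        (((∑ A ∈ (M κ).powerset, ((-1 : ℤ) ^ A.card)) : ℤ) : ℚ) := by
      push_cast
      rfl
    rw [h2, Finset.sum_powerset_neg_one_pow_card]
    have h3 : (M κ = ∅) ↔ IsProperColoring ends κ := by
      simp [hM, Finset.filter_eq_empty_iff, IsProperColoring]
    by_cases hM0 : M κ = ∅
    · rw [if_pos hM0, if_pos (h3.mp hM0)]
      norm_num
    · rw [if_neg hM0, if_neg (fun hp => hM0 (h3.mpr hp))]
      norm_num
  simp_rw [inner]
  rw [Finset.sum_boole]
end

section
/- The weighted chromatic symmetric function satisfies deletion-contraction: for any weighted graph (G,ω) and any edge e of G, X_{(G,ω)} = X_{(G∖e, ω)} − X_{(G/e, ω/e)}. -/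
/-- The weighted chromatic symmetric function of a weighted multigraph, as a
formal power series in the variables `x₀, x₁, x₂, …`: the coefficient of the
monomial `∏ xᵢ^{d i}` is the number of proper colorings `κ : V → ℕ` such that
for every color `i`, the total weight of the vertices colored `i` is `d i`. -/
noncomputable def wcsf {V E : Type*} [Fintype V] (ends : E → Sym2 V) (ω : V → ℕ) :
    MvPowerSeries ℕ ℚ :=
  fun d => (Set.ncard {κ : V → ℕ | IsProperColoring ends κ ∧
    ∀ i : ℕ, d i = ∑ v : V, if κ v = i then ω v else 0} : ℚ)

lemma wcsf_finite_aux {V : Type*} [Fintype V] (ω : V → ℕ) (hω : ∀ x, 0 < ω x)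
    (d : ℕ →₀ ℕ) (P : (V → ℕ) → Prop) :
    {κ : V → ℕ | P κ ∧ ∀ i : ℕ, d i = ∑ v : V, if κ v = i then ω v else 0}.Finite := by
  apply Set.Finite.subset (Set.Finite.pi (t := fun _ : V => (d.support : Set ℕ))
    (fun _ => d.support.finite_toSet))
  rintro κ ⟨-, hκ⟩ x -
  simp only [Finset.mem_coe, Finsupp.mem_support_iff]
  have h1 : ω x ≤ ∑ v : V, if κ v = κ x then ω v else 0 := by
    have := Finset.single_le_sum (f := fun v => if κ v = κ x then ω v else 0)
      (fun _ _ => Nat.zero_le _) (Finset.mem_univ x)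
    simpa using this
  rw [hκ (κ x)]
  have := hω x
  omega

lemma weight_sum_eq {V : Type*} [Fintype V] [DecidableEq V] (ω : V → ℕ)
    (u v : V) (huv : u ≠ v) (κ : V → ℕ) (h : κ u = κ v) (i : ℕ) :
    (∑ x : {x : V // x ≠ u}, if κ x.1 = i then (if x.1 = v then ω u + ω v else ω x.1) else 0)
      = ∑ x : V, if κ x = i then ω x else 0 := by
  rw [← Finset.sum_subtype (Finset.univ.erase u) (by simp)
    (fun x => if κ x = i then (if x = v then ω u + ω v else ω x) else 0)]
  rw [← Finset.add_sum_erase _ _ (Finset.mem_univ u),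
    ← Finset.add_sum_erase _ (fun x => if κ x = i then (if x = v then ω u + ω v else ω x) else 0)
      (Finset.mem_erase.2 ⟨huv.symm, Finset.mem_univ v⟩),
    ← Finset.add_sum_erase _ (fun x => if κ x = i then ω x else 0)
      (Finset.mem_erase.2 ⟨huv.symm, Finset.mem_univ v⟩)]
  have hrest : ∀ x ∈ ((Finset.univ.erase u).erase v),
      (if κ x = i then (if x = v then ω u + ω v else ω x) else 0)
        = (if κ x = i then ω x else 0) := by
    intro x hx
    rw [if_neg (Finset.mem_erase.1 hx).1]
  rw [Finset.sum_congr rfl hrest, if_pos rfl, h]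
  by_cases hi : κ v = i
  · simp [hi]
    omega
  · simp [hi]

lemma wcsf_sub_apply (f g : MvPowerSeries ℕ ℚ) (d : ℕ →₀ ℕ) : (f - g) d = f d - g d := rfl

lemma wcsf_count {V E : Type*} [Fintype V] [DecidableEq V]
    (ends : E → Sym2 V) (ω : V → ℕ) (hω : ∀ x, 0 < ω x)
    (e : E) (u v : V) (he : ends e = s(u, v)) (huv : u ≠ v) (d : ℕ →₀ ℕ) :
    {κ : V → ℕ | IsProperColoring ends κ ∧
        ∀ i : ℕ, d i = ∑ x : V, if κ x = i then ω x else 0}.ncard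
      + {κ : {x : V // x ≠ u} → ℕ | IsProperColoring (fun f : {f : E // f ≠ e} =>
            Sym2.map (fun x : V =>
              if h : x = u then (⟨v, huv.symm⟩ : {x : V // x ≠ u}) else ⟨x, h⟩)
              (ends f.1)) κ ∧
          ∀ i : ℕ, d i = ∑ x : {x : V // x ≠ u}, if κ x = i then
            (if x.1 = v then ω u + ω v else ω x.1) else 0}.ncard
      = {κ : V → ℕ | IsProperColoring (fun f : {f : E // f ≠ e} => ends f.1) κ ∧
          ∀ i : ℕ, d i = ∑ x : V, if κ x = i then ω x else 0}.ncard := by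
  classical
  set g : V → {x : V // x ≠ u} := fun x =>
    if h : x = u then (⟨v, huv.symm⟩ : {x : V // x ≠ u}) else ⟨x, h⟩ with hgdef
  set Ψ : ({x : V // x ≠ u} → ℕ) → (V → ℕ) := fun κ' => κ' ∘ g with hΨdef
  set ω' : {x : V // x ≠ u} → ℕ := fun x => if x.1 = v then ω u + ω v else ω x.1 with hω'def
  set A := {κ : V → ℕ | IsProperColoring ends κ ∧
    ∀ i : ℕ, d i = ∑ x : V, if κ x = i then ω x else 0} with hAdef
  set C := {κ : {x : V // x ≠ u} → ℕ | IsProperColoring (fun f : {f : E // f ≠ e} =>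
      Sym2.map g (ends f.1)) κ ∧
    ∀ i : ℕ, d i = ∑ x : {x : V // x ≠ u}, if κ x = i then ω' x else 0} with hCdef
  set S := {κ : V → ℕ | IsProperColoring (fun f : {f : E // f ≠ e} => ends f.1) κ ∧
    ∀ i : ℕ, d i = ∑ x : V, if κ x = i then ω x else 0} with hSdef
  -- basic facts about g and Ψ
  have hgu : g u = ⟨v, huv.symm⟩ := by simp [hgdef]
  have hgne : ∀ (x : V) (h : x ≠ u), g x = ⟨x, h⟩ := by intro x h; simp [hgdef, h]
  have hΨu : ∀ κ', Ψ κ' u = Ψ κ' v := by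
    intro κ'
    simp [hΨdef, hgu, hgne v huv.symm]
  have hΨne : ∀ κ' (x : V) (h : x ≠ u), Ψ κ' x = κ' ⟨x, h⟩ := by
    intro κ' x h
    simp [hΨdef, hgne x h]
  have hΨinj : Function.Injective Ψ := by
    intro κ' κ'' h
    funext x
    have h0 := congrFun h x.1
    exact (hΨne κ' x.1 x.2).symm.trans (h0.trans (hΨne κ'' x.1 x.2))
  -- properness characterization
  have hproper : ∀ κ : V → ℕ, IsProperColoring ends κ ↔
      (IsProperColoring (fun f : {f : E // f ≠ e} => ends f.1) κ ∧ κ u ≠ κ v) := by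
    intro κ
    constructor
    · intro h
      refine ⟨fun f => h f.1, ?_⟩
      have := h e
      rw [he] at this
      simpa [Sym2.mk_isDiag_iff] using this
    · rintro ⟨h1, h2⟩ f
      by_cases hf : f = e
      · subst hf
        rw [he]
        simpa [Sym2.mk_isDiag_iff] using h2
      · exact h1 ⟨f, hf⟩
  -- the image of C under Ψ
  have himg : Ψ '' C = S ∩ {κ | κ u = κ v} := by
    ext κ
    constructor
    · rintro ⟨κ', ⟨hp, hw⟩, rfl⟩
      have hval : ∀ x : {x : V // x ≠ u}, κ' x = Ψ κ' x.1 := by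
        intro x
        rw [hΨne κ' x.1 x.2, Subtype.eta]
      refine ⟨⟨?_, ?_⟩, hΨu κ'⟩
      · intro f
        have := hp f
        rw [Sym2.map_map] at this
        exact this
      · intro i
        rw [hw i, ← weight_sum_eq ω u v huv (Ψ κ') (hΨu κ') i]
        refine Finset.sum_congr rfl fun x _ => ?_
        rw [hval x]
    · rintro ⟨⟨hp, hw⟩, hc⟩
      refine ⟨fun x => κ x.1, ⟨?_, ?_⟩, ?_⟩
      · have hcomp : ((fun x : {x : V // x ≠ u} => κ x.1) ∘ g) = κ := by
          funext x
          by_cases hx : x = u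
          · subst hx
            simp only [Function.comp_apply, hgu]
            exact Eq.symm hc
          · simp [hgne x hx]
        intro f
        rw [Sym2.map_map, hcomp]
        exact hp f
      · intro i
        rw [hw i, ← weight_sum_eq ω u v huv κ hc i]
      · funext x
        by_cases hx : x = u
        · subst hx
          rw [hΨu, hΨne _ v huv.symm]
          exact Eq.symm hc
        · exact hΨne (fun x => κ x.1) x hx
  -- A as a subset of S
  have hA : A = S ∩ {κ | κ u ≠ κ v} := by
    ext κ
    simp only [hAdef, hSdef, Set.mem_setOf_eq, Set.mem_inter_iff, hproper κ]
    tauto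
  -- decomposition of S
  have hdecomp : S = A ∪ Ψ '' C := by
    rw [hA, himg, ← Set.inter_union_distrib_left]
    have : ({κ : V → ℕ | κ u ≠ κ v} ∪ {κ | κ u = κ v}) = Set.univ := by
      ext κ
      simp [em' (κ u = κ v)]
    rw [this, Set.inter_univ]
  -- finiteness
  have hAfin : A.Finite := wcsf_finite_aux ω hω d _
  have hω'pos : ∀ x : {x : V // x ≠ u}, 0 < ω' x := by
    intro x
    rw [hω'def]
    dsimp only
    split
    · exact Nat.add_pos_left (hω u) _
    · exact hω _
  have hCfin : C.Finite := wcsf_finite_aux ω' hω'pos d _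
  have hdisj : Disjoint A (Ψ '' C) := by
    rw [Set.disjoint_left]
    intro κ hκA hκC
    rw [hA] at hκA
    rw [himg] at hκC
    exact hκA.2 hκC.2
  rw [hdecomp, Set.ncard_union_eq hdisj hAfin (hCfin.image Ψ),
    Set.ncard_image_of_injective _ hΨinj]

/-- Deletion-contraction for the weighted chromatic symmetric function:
`X_{(G,ω)} = X_{(G∖e,ω)} - X_{(G/e,ω/e)}` for a non-loop edge `e` with
endpoints `u ≠ v`.  The contraction has vertex set `{x // x ≠ u}`, the edge `e`
removed, endpoints transported by merging `u` into `v`, and the weight of the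
merged vertex is `ω u + ω v`. -/
theorem wcsf_deletion_contraction {V E : Type*} [Fintype V] [DecidableEq V]
    (ends : E → Sym2 V) (ω : V → ℕ) (hω : ∀ x, 0 < ω x)
    (e : E) (u v : V) (he : ends e = s(u, v)) (huv : u ≠ v) :
    wcsf ends ω =
      wcsf (fun f : {f : E // f ≠ e} => ends f.1) ω -
      wcsf (fun f : {f : E // f ≠ e} =>
          Sym2.map (fun x : V =>
            if h : x = u then (⟨v, huv.symm⟩ : {x : V // x ≠ u}) else ⟨x, h⟩)
            (ends f.1))
        (fun x : {x : V // x ≠ u} => if x.1 = v then ω u + ω v else ω x.1) := by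
  funext d
  rw [wcsf_sub_apply]
  simp only [wcsf]
  rw [← wcsf_count ends ω hω e u v he huv d]
  push_cast
  ring
end

section
/- The weighted chromatic symmetric function satisfies the deletion-near-contraction relation: for any weighted graph (G,ω) and non-loop edge e, X_{(G,ω)} = X_{(G∖e, ω)} − X_{((G,ω)⊙e) ∖ ℓ_e} + X_{(G,ω)⊙e}. -/
/-- The vertex map performed when contracting the edge `uv`: merge `u` into `v`,
landing inside the vertex set of the near-contraction (which has one extra new
vertex, represented by `Sum.inr ()`). -/
def contrMap {V : Type*} [DecidableEq V] (u v : V) (huv : u ≠ v) :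
    V → {x : V // x ≠ u} :=
  fun x => if h : x = u then ⟨v, huv.symm⟩ else ⟨x, h⟩

/-- Endpoints map of the near-contraction `(G,ω)⊙e`: contract `e` into the
vertex `v' = ⟨v,_⟩` and attach one new pendant edge `ℓ_e` (index `Sum.inr ()`)
joining `v'` to a new leaf `v'' = Sum.inr ()`. -/
def odotEnds {V E : Type*} [DecidableEq V] (ends : E → Sym2 V) (e : E)
    (u v : V) (huv : u ≠ v) :
    ({f : E // f ≠ e} ⊕ Unit) → Sym2 ({x : V // x ≠ u} ⊕ Unit) :=
  Sum.elim
    (fun f => Sym2.map (fun x => Sum.inl (contrMap u v huv x)) (ends f.1))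
    (fun _ => s(Sum.inl ⟨v, huv.symm⟩, Sum.inr ()))

/-- Weights of the near-contraction: the merged vertex gets weight
`ω u + ω v - 1`, the new leaf gets weight `1`, others are unchanged. -/
def odotWeight {V : Type*} [DecidableEq V] (ω : V → ℕ) (u v : V) :
    ({x : V // x ≠ u} ⊕ Unit) → ℕ :=
  Sum.elim (fun x => if x.1 = v then ω u + ω v - 1 else ω x.1) (fun _ => 1)

set_option linter.unusedSectionVars false

private lemma coloring_set_finite {T : Type*} [Fintype T] (d : ℕ →₀ ℕ)
    (ω0 : T → ℕ) (hω0 : ∀ t, 0 < ω0 t) (S : Set (T → ℕ))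
    (hS : ∀ κ ∈ S, ∀ i, d i = ∑ t, if κ t = i then ω0 t else 0) :
    S.Finite := by
  apply Set.Finite.subset (Set.Finite.pi (fun _ : T => (d.support : Set ℕ).toFinite))
  intro κ hκ
  simp only [Set.mem_pi, Set.mem_univ, forall_true_left]
  intro t
  simp only [Finset.mem_coe, Finsupp.mem_support_iff]
  have hd := hS κ hκ (κ t)
  have hle : ω0 t ≤ ∑ s, if κ s = κ t then ω0 s else 0 := by
    have := Finset.single_le_sum (f := fun s => if κ s = κ t then ω0 s else 0)
      (fun s _ => Nat.zero_le _) (Finset.mem_univ t)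
    simpa using this
  have := hω0 t
  omega

section aux
variable {V E : Type*} [Fintype V] [DecidableEq V]

/-- Lift a coloring of `V` through contraction: the new leaf gets the color of `v`. -/
def liftCol {V : Type*} (u v : V) (κ : V → ℕ) : ({x : V // x ≠ u} ⊕ Unit) → ℕ :=
  Sum.elim (fun x => κ x.1) (fun _ => κ v)

private lemma liftCol_contrMap (u v : V) (huv : u ≠ v) (κ : V → ℕ)
    (hκ : κ u = κ v) (x : V) :
    liftCol u v κ (Sum.inl (contrMap u v huv x)) = κ x := by
  unfold liftCol contrMap
  split
  · simp_all
  · rfl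

private lemma proper_split (ends : E → Sym2 V) (e : E) (u v : V)
    (he : ends e = s(u,v)) (κ : V → ℕ) :
    IsProperColoring ends κ ↔
      IsProperColoring (fun f : {f : E // f ≠ e} => ends f.1) κ ∧ κ u ≠ κ v := by
  constructor
  · intro h
    refine ⟨fun f => h f.1, ?_⟩
    have := h e
    rw [he] at this
    simpa using this
  · rintro ⟨h1, h2⟩ f
    by_cases hf : f = e
    · subst hf; rw [he]; simpa using h2
    · exact h1 ⟨f, hf⟩

private lemma proper_odot_split (ends : E → Sym2 V) (e : E) (u v : V) (huv : u ≠ v)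
    (κ' : ({x : V // x ≠ u} ⊕ Unit) → ℕ) :
    IsProperColoring (odotEnds ends e u v huv) κ' ↔
      IsProperColoring (fun f : {f : E // f ≠ e} =>
          odotEnds ends e u v huv (Sum.inl f)) κ' ∧
        κ' (Sum.inr ()) ≠ κ' (Sum.inl ⟨v, huv.symm⟩) := by
  constructor
  · intro h
    refine ⟨fun f => h (Sum.inl f), ?_⟩
    have := h (Sum.inr ())
    simp only [odotEnds, Sum.elim_inr, Sym2.map_pair_eq, Sym2.mk_isDiag_iff] at this
    exact fun hcon => this hcon.symm
  · rintro ⟨h1, h2⟩ f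
    cases f with
    | inl f => exact h1 f
    | inr _ =>
      simp only [odotEnds, Sum.elim_inr, Sym2.map_pair_eq, Sym2.mk_isDiag_iff]
      exact fun h => h2 h.symm

private lemma proper_lift (ends : E → Sym2 V) (e : E) (u v : V) (huv : u ≠ v)
    (κ : V → ℕ) (hκ : κ u = κ v) :
    IsProperColoring (fun f : {f : E // f ≠ e} => ends f.1) κ ↔
      IsProperColoring (fun f : {f : E // f ≠ e} =>
        odotEnds ends e u v huv (Sum.inl f)) (liftCol u v κ) := by
  have hcomp : (fun x => liftCol u v κ (Sum.inl (contrMap u v huv x))) = κ :=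
    funext fun x => liftCol_contrMap u v huv κ hκ x
  unfold IsProperColoring
  constructor <;> intro h f <;> have h2 := h f <;>
    simpa [odotEnds, Sym2.map_map, hcomp] using h2

private lemma weight_lift (ω : V → ℕ) (u v : V) (huv : u ≠ v)
    (hω : ∀ x, 0 < ω x) (κ : V → ℕ) (hκ : κ u = κ v) (i : ℕ) :
    (∑ t : V, if κ t = i then ω t else 0) =
      ∑ y : ({x : V // x ≠ u} ⊕ Unit),
        if liftCol u v κ y = i then odotWeight ω u v y else 0 := by
  rw [Fintype.sum_sum_type]
  have hsub : (∑ x : {x : V // x ≠ u},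
      if liftCol u v κ (Sum.inl x) = i then odotWeight ω u v (Sum.inl x) else 0)
      = ∑ x ∈ Finset.univ.erase u,
        (if κ x = i then (if x = v then ω u + ω v - 1 else ω x) else 0) := by
    rw [Finset.sum_subtype (Finset.univ.erase u) (p := fun x => x ≠ u)
      (fun x => by simp)
      (fun x => if κ x = i then (if x = v then ω u + ω v - 1 else ω x) else 0)]
    apply Finset.sum_congr rfl
    intro x _
    simp only [liftCol, odotWeight, Sum.elim_inl]
    rfl
  rw [hsub]
  have hv : v ∈ Finset.univ.erase u := by simp [Ne.symm huv]
  rw [← Finset.add_sum_erase _ _ (Finset.mem_univ u),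
    ← Finset.add_sum_erase _ _ hv,
    ← Finset.add_sum_erase _
      (fun x => if κ x = i then (if x = v then ω u + ω v - 1 else ω x) else 0) hv]
  have hrest : ∑ x ∈ (Finset.univ.erase u).erase v,
      (if κ x = i then (if x = v then ω u + ω v - 1 else ω x) else 0)
      = ∑ x ∈ (Finset.univ.erase u).erase v, (if κ x = i then ω x else 0) := by
    apply Finset.sum_congr rfl
    intro x hx
    have : x ≠ v := (Finset.mem_erase.1 hx).1
    simp [this]
  rw [hrest, Fintype.sum_unique]
  show _ = _ + (if liftCol u v κ (Sum.inr ()) = i then odotWeight ω u v (Sum.inr ()) else 0)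
  simp only [liftCol, odotWeight, Sum.elim_inr]
  rw [hκ]
  have h1 := hω u; have h2 := hω v
  by_cases h : κ v = i <;> simp [h] <;> omega

end aux

/-- Deletion-near-contraction for the weighted chromatic symmetric function:
`X_{(G,ω)} = X_{(G∖e,ω)} - X_{((G,ω)⊙e)∖ℓ_e} + X_{(G,ω)⊙e}` for any non-loop
edge `e` of the weighted graph `(G,ω)`.  The near-contraction `(G,ω)⊙e`
contracts `e` into a vertex `v'`, attaches a new leaf of weight `1` to `v'` via
the pendant edge `ℓ_e = Sum.inr ()`, and decreases the weight of `v'` by `1`. -/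
theorem wcsf_deletion_near_contraction {V E : Type*} [Fintype V] [DecidableEq V]
    (ends : E → Sym2 V) (ω : V → ℕ) (hω : ∀ x, 0 < ω x)
    (e : E) (u v : V) (he : ends e = s(u, v)) (huv : u ≠ v) :
    wcsf ends ω =
      wcsf (fun f : {f : E // f ≠ e} => ends f.1) ω -
      wcsf (fun f : {f : E // f ≠ e} => (odotEnds ends e u v huv) (Sum.inl f))
          (odotWeight ω u v) +
      wcsf (odotEnds ends e u v huv) (odotWeight ω u v) := by
  funext d
  show wcsf ends ω d =
    wcsf (fun f : {f : E // f ≠ e} => ends f.1) ω d -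
    wcsf (fun f : {f : E // f ≠ e} => (odotEnds ends e u v huv) (Sum.inl f))
        (odotWeight ω u v) d +
    wcsf (odotEnds ends e u v huv) (odotWeight ω u v) d
  unfold wcsf
  set del := fun f : {f : E // f ≠ e} => ends f.1 with hdel
  set del' := fun f : {f : E // f ≠ e} => (odotEnds ends e u v huv) (Sum.inl f) with hdel'
  set ω' := odotWeight ω u v with hω'def
  have hω' : ∀ y, 0 < ω' y := by
    rintro (x | y)
    · simp only [hω'def, odotWeight, Sum.elim_inl]
      split
      · have := hω u; have := hω v; omega
      · exact hω _
    · exact Nat.one_pos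
  set A := {κ : V → ℕ | IsProperColoring ends κ ∧
    ∀ i : ℕ, d i = ∑ t : V, if κ t = i then ω t else 0} with hA
  set B := {κ : V → ℕ | IsProperColoring del κ ∧
    ∀ i : ℕ, d i = ∑ t : V, if κ t = i then ω t else 0} with hBdef
  set C := {κ' : ({x : V // x ≠ u} ⊕ Unit) → ℕ | IsProperColoring del' κ' ∧
    ∀ i : ℕ, d i = ∑ t, if κ' t = i then ω' t else 0} with hCdef
  set D := {κ' : ({x : V // x ≠ u} ⊕ Unit) → ℕ |
    IsProperColoring (odotEnds ends e u v huv) κ' ∧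
    ∀ i : ℕ, d i = ∑ t, if κ' t = i then ω' t else 0} with hDdef
  set B₂ := {κ : V → ℕ | IsProperColoring del κ ∧
    (∀ i : ℕ, d i = ∑ t : V, if κ t = i then ω t else 0) ∧ κ u = κ v} with hB₂def
  set C₂ := {κ' : ({x : V // x ≠ u} ⊕ Unit) → ℕ | IsProperColoring del' κ' ∧
    (∀ i : ℕ, d i = ∑ t, if κ' t = i then ω' t else 0) ∧
    κ' (Sum.inr ()) = κ' (Sum.inl ⟨v, huv.symm⟩)} with hC₂def
  -- finiteness
  have finA : A.Finite := coloring_set_finite d ω hω A (fun κ hκ => hκ.2)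
  have finB : B.Finite := coloring_set_finite d ω hω B (fun κ hκ => hκ.2)
  have finC : C.Finite := coloring_set_finite d ω' hω' C (fun κ hκ => hκ.2)
  have finD : D.Finite := coloring_set_finite d ω' hω' D (fun κ hκ => hκ.2)
  have finB₂ : B₂.Finite := coloring_set_finite d ω hω B₂ (fun κ hκ => hκ.2.1)
  have finC₂ : C₂.Finite := coloring_set_finite d ω' hω' C₂ (fun κ hκ => hκ.2.1)
  -- decomposition of B
  have hBun : B = A ∪ B₂ := by
    ext κ
    simp only [hA, hBdef, hB₂def, Set.mem_setOf_eq, Set.mem_union,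
      proper_split ends e u v he κ]
    by_cases h : κ u = κ v <;> tauto
  have hBdisj : Disjoint A B₂ := by
    rw [Set.disjoint_left]
    intro κ hκA hκB₂
    exact ((proper_split ends e u v he κ).1 hκA.1).2 hκB₂.2.2
  -- decomposition of C
  have hCun : C = D ∪ C₂ := by
    ext κ'
    simp only [hCdef, hDdef, hC₂def, Set.mem_setOf_eq, Set.mem_union,
      proper_odot_split ends e u v huv κ']
    by_cases h : κ' (Sum.inr ()) = κ' (Sum.inl ⟨v, huv.symm⟩) <;> tauto
  have hCdisj : Disjoint D C₂ := by
    rw [Set.disjoint_left]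
    intro κ' hκD hκC₂
    exact ((proper_odot_split ends e u v huv κ').1 hκD.1).2 hκC₂.2.2
  -- bijection between B₂ and C₂
  have himg : (liftCol u v) '' B₂ = C₂ := by
    ext κ'
    constructor
    · rintro ⟨κ, ⟨hp, hW, hEq⟩, rfl⟩
      refine ⟨(proper_lift ends e u v huv κ hEq).1 hp, ?_, rfl⟩
      intro i
      exact (hW i).trans (weight_lift ω u v huv hω κ hEq i)
    · rintro ⟨hp, hW, hEq⟩
      refine ⟨fun x => κ' (Sum.inl (contrMap u v huv x)), ?_, ?_⟩
      · have hlift : liftCol u v (fun x => κ' (Sum.inl (contrMap u v huv x))) = κ' := by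
          funext y
          cases y with
          | inl x =>
            show κ' (Sum.inl (contrMap u v huv x.1)) = κ' (Sum.inl x)
            congr 1
            unfold contrMap
            rw [dif_neg x.2]
          | inr y =>
            show κ' (Sum.inl (contrMap u v huv v)) = κ' (Sum.inr y)
            unfold contrMap
            rw [dif_neg (Ne.symm huv)]
            exact hEq.symm
        have hEq' : κ' (Sum.inl (contrMap u v huv u)) = κ' (Sum.inl (contrMap u v huv v)) := by
          congr 1
          unfold contrMap
          rw [dif_pos rfl, dif_neg (Ne.symm huv)]
        refine ⟨?_, ?_, hEq'⟩
        · apply (proper_lift ends e u v huv _ hEq').2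
          rw [hlift]; exact hp
        · intro i
          rw [weight_lift ω u v huv hω _ hEq' i, hlift]
          exact hW i
      · -- liftCol applied equals κ'
        funext y
        cases y with
        | inl x =>
          show κ' (Sum.inl (contrMap u v huv x.1)) = κ' (Sum.inl x)
          congr 1
          unfold contrMap
          rw [dif_neg x.2]
        | inr y =>
          show κ' (Sum.inl (contrMap u v huv v)) = κ' (Sum.inr y)
          unfold contrMap
          rw [dif_neg (Ne.symm huv)]
          exact hEq.symm
  have hinj : Set.InjOn (liftCol u v) B₂ := by
    intro κ₁ h₁ κ₂ h₂ heq
    funext x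
    by_cases hx : x = u
    · subst hx
      have := congrFun heq (Sum.inr ())
      simp only [liftCol, Sum.elim_inr] at this
      rw [h₁.2.2, h₂.2.2]; exact this
    · exact congrFun heq (Sum.inl ⟨x, hx⟩)
  have hcard : B₂.ncard = C₂.ncard := by
    rw [← himg, Set.ncard_image_of_injOn hinj]
  have hBcard : B.ncard = A.ncard + B₂.ncard := by
    rw [hBun, Set.ncard_union_eq hBdisj finA finB₂]
  have hCcard : C.ncard = D.ncard + C₂.ncard := by
    rw [hCun, Set.ncard_union_eq hCdisj finD finC₂]
  rw [hBcard, hCcard, ← hcard]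
  push_cast
  ring
end

section
/- Let T be a forest with n vertices and let M_{(T,m)}(z) = Σ_{A ⊆ E(T)} z_{λ(T,m,A)} be the states-model expansion of its marked polynomial, where all marks m(v) are strict (w > d+1). Then substituting z_{w,d} ↦ D_{w,d} := Σ_{i=0}^{d} (−1)^i C(d,i) z_{w−i,0} z_{1,0}^i yields an expression in which the total number of monomials (counted with multiplicity, before any cancellation) is 3^{n−1}, and no cancellations occur: all monomials containing z_{1,0}^ℓ have sign (−1)^ℓ. -/
open MvPolynomial

/-- The undotting substitution: the variable `z_{(w,d)}` is sent to
`D_{w,d} = ∑_{i=0}^{d} (-1)^i C(d,i) z_{(w-i,0)} z_{(1,0)}^i`. -/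
noncomputable def undot (p : ℕ × ℕ) : MvPolynomial (ℕ × ℕ) ℚ :=
  ∑ i ∈ Finset.range (p.2 + 1),
    ((-1 : ℚ) ^ i * (p.2.choose i : ℚ)) • (X (p.1 - i, 0) * X (1, 0) ^ i)

/-- The states-model expansion of the `M`-polynomial of a marked graph:
`M_{(G,m)}(z) = ∑_{A ⊆ E(G)} z_{λ(G,m,A)}`, where `λ(G,m,A)` is the multiset of
total marks (dot-sums) of the connected components of the spanning subgraph
with edge set `A`; a component with vertex set `S` has total mark
`(∑_{x∈S} w_x, ∑_{x∈S} d_x + (|S| - 1))`. -/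
noncomputable def Mpoly {V : Type*} [Fintype V] [DecidableEq V]
    (G : SimpleGraph V) [DecidableRel G.Adj] (m : V → ℕ × ℕ) :
    MvPolynomial (ℕ × ℕ) ℚ :=
  ∑ A ∈ G.edgeFinset.powerset,
    ∏ᶠ c : (SimpleGraph.fromEdgeSet (↑A : Set (Sym2 V))).ConnectedComponent,
      X ((∑ᶠ x ∈ c.supp, (m x).1),
         (∑ᶠ x ∈ c.supp, (m x).2) + (Nat.card c.supp - 1))

open SimpleGraph in
lemma reach_sup_edge {V : Type*} {K : SimpleGraph V} {u v x y : V}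
    (w : (K ⊔ edge u v).Walk x y) :
    K.Reachable x y ∨ (K.Reachable x u ∧ K.Reachable v y) ∨
      (K.Reachable x v ∧ K.Reachable u y) := by
  have step : ∀ {a b c : V}, K.Reachable a b →
      (K.Reachable b c ∨ (K.Reachable b u ∧ K.Reachable v c) ∨
        (K.Reachable b v ∧ K.Reachable u c)) →
      (K.Reachable a c ∨ (K.Reachable a u ∧ K.Reachable v c) ∨
        (K.Reachable a v ∧ K.Reachable u c)) := by
    rintro a b c hab (h | ⟨h1, h2⟩ | ⟨h1, h2⟩)
    · exact Or.inl (hab.trans h)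
    · exact Or.inr (Or.inl ⟨hab.trans h1, h2⟩)
    · exact Or.inr (Or.inr ⟨hab.trans h1, h2⟩)
  induction w with
  | nil => exact Or.inl (Reachable.refl _)
  | @cons a b c h p ih =>
    rcases (sup_adj _ _ _ _).mp h with h' | h'
    · exact step h'.reachable ih
    · rw [edge_adj] at h'
      obtain ⟨(⟨rfl, rfl⟩ | ⟨rfl, rfl⟩), hne⟩ := h'
      · rcases ih with h | ⟨h1, h2⟩ | ⟨h1, h2⟩
        · exact Or.inr (Or.inl ⟨Reachable.refl _, h⟩)
        · exact Or.inl (h1.symm.trans h2)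
        · exact Or.inl h2
      · rcases ih with h | ⟨h1, h2⟩ | ⟨h1, h2⟩
        · exact Or.inr (Or.inr ⟨Reachable.refl _, h⟩)
        · exact Or.inl h2
        · exact Or.inl (h1.symm.trans h2)

open SimpleGraph in
lemma card_comps_sup_edge {V : Type*} [Fintype V] {K : SimpleGraph V} {u v : V}
    (hne : u ≠ v) (hnr : ¬ K.Reachable u v) :
    Nat.card K.ConnectedComponent = Nat.card (K ⊔ edge u v).ConnectedComponent + 1 := by
  classical
  set cv := K.connectedComponentMk v with hcv
  let f : K.ConnectedComponent → (K ⊔ edge u v).ConnectedComponent :=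
    ConnectedComponent.map (Hom.ofLE le_sup_left)
  have hfmk : ∀ x : V, f (K.connectedComponentMk x)
      = (K ⊔ edge u v).connectedComponentMk x := fun x =>
    ConnectedComponent.map_mk _ _
  have hfib : ∀ a b : K.ConnectedComponent, f a = f b →
      a = b ∨ (a = K.connectedComponentMk u ∧ b = cv) ∨
        (a = cv ∧ b = K.connectedComponentMk u) := by
    refine ConnectedComponent.ind₂ ?_
    intro x y hf
    rw [hfmk, hfmk] at hf
    obtain ⟨p⟩ := (ConnectedComponent.eq.mp hf)
    rcases reach_sup_edge p with h | ⟨h1, h2⟩ | ⟨h1, h2⟩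
    · exact Or.inl (ConnectedComponent.sound h)
    · exact Or.inr (Or.inl ⟨ConnectedComponent.sound h1, (ConnectedComponent.sound h2.symm)⟩)
    · exact Or.inr (Or.inr ⟨ConnectedComponent.sound h1, (ConnectedComponent.sound h2.symm)⟩)
  have hcu_ne : K.connectedComponentMk u ≠ cv := fun h => hnr (ConnectedComponent.eq.mp h)
  let g : {c : K.ConnectedComponent // c ≠ cv} → (K ⊔ edge u v).ConnectedComponent :=
    fun c => f c.1
  have hg : Function.Bijective g := by
    constructor
    · rintro ⟨a, ha⟩ ⟨b, hb⟩ h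
      rcases hfib a b h with h | ⟨h1, h2⟩ | ⟨h1, h2⟩
      · exact Subtype.ext h
      · exact absurd h2 hb
      · exact absurd h1 ha
    · intro c'
      obtain ⟨x, hx⟩ := c'.exists_rep
      by_cases hxa : K.connectedComponentMk x = cv
      · refine ⟨⟨K.connectedComponentMk u, hcu_ne⟩, ?_⟩
        have huv : (K ⊔ edge u v).connectedComponentMk u
            = (K ⊔ edge u v).connectedComponentMk v := by
          refine ConnectedComponent.sound ?_
          exact Adj.reachable (by rw [sup_adj, edge_adj]; exact Or.inr ⟨Or.inl ⟨rfl, rfl⟩, hne⟩)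
        show f (K.connectedComponentMk u) = c'
        calc f (K.connectedComponentMk u)
            = (K ⊔ edge u v).connectedComponentMk u := hfmk u
          _ = (K ⊔ edge u v).connectedComponentMk v := huv
          _ = f (K.connectedComponentMk v) := (hfmk v).symm
          _ = f (K.connectedComponentMk x) := congrArg f hxa.symm
          _ = (K ⊔ edge u v).connectedComponentMk x := hfmk x
          _ = c' := hx
      · exact ⟨⟨K.connectedComponentMk x, hxa⟩, by
          show f (K.connectedComponentMk x) = c'; rw [hfmk]; exact hx⟩
  haveI : Fintype K.ConnectedComponent := Fintype.ofFinite _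
  haveI : Fintype (K ⊔ edge u v).ConnectedComponent := Fintype.ofFinite _
  have h2 : Fintype.card (K ⊔ edge u v).ConnectedComponent
      = Fintype.card {c : K.ConnectedComponent // c ≠ cv} :=
    (Fintype.card_of_bijective hg).symm
  have h1 : Fintype.card {c : K.ConnectedComponent // c ≠ cv}
      = Fintype.card K.ConnectedComponent - 1 := by
    rw [Fintype.card_subtype_compl, Fintype.card_subtype_eq]
  have h3 : 0 < Fintype.card K.ConnectedComponent := Fintype.card_pos_iff.mpr ⟨cv⟩
  simp only [Nat.card_eq_fintype_card]
  omega

open SimpleGraph in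
lemma forest_card {V : Type*} [Fintype V] [DecidableEq V] {G : SimpleGraph V}
    (hac : G.IsAcyclic) (A : Finset (Sym2 V)) (hsub : ↑A ⊆ G.edgeSet) :
    Fintype.card V
      = Nat.card (fromEdgeSet (↑A : Set (Sym2 V))).ConnectedComponent + A.card := by
  classical
  induction A using Finset.induction_on with
  | empty =>
    have hbij : Function.Bijective ((⊥ : SimpleGraph V).connectedComponentMk) :=
      ⟨fun a b h => reachable_bot.mp (ConnectedComponent.eq.mp h),
        fun c => c.exists_rep⟩
    have : (fromEdgeSet (↑(∅ : Finset (Sym2 V)) : Set (Sym2 V))) = ⊥ := by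
      simp
    rw [this, Finset.card_empty, Nat.add_zero, ← Nat.card_eq_fintype_card]
    exact Nat.card_eq_of_bijective _ hbij
  | @insert e B he ih =>
    have heB : (↑B : Set (Sym2 V)) ⊆ G.edgeSet := by
      refine subset_trans ?_ hsub
      simp only [Finset.coe_insert]
      exact Set.subset_insert _ _
    have heG : e ∈ G.edgeSet := hsub (by simp)
    specialize ih heB
    revert he heG
    induction e using Sym2.ind with
    | _ u v =>
      intro he heG
      have hne : u ≠ v := G.ne_of_adj ((mem_edgeSet _).mp heG)
      have hKle : fromEdgeSet (↑B : Set (Sym2 V)) ≤ G \ fromEdgeSet {s(u,v)} := by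
        intro a b hab
        rw [fromEdgeSet_adj] at hab
        rw [sdiff_adj, fromEdgeSet_adj]
        refine ⟨(mem_edgeSet _).mp (heB hab.1), ?_⟩
        rintro ⟨hmem, -⟩
        rw [Set.mem_singleton_iff] at hmem
        exact he (by rw [← hmem]; exact hab.1)
      have hbr : ¬ (G \ fromEdgeSet {s(u,v)}).Reachable u v :=
        ((isAcyclic_iff_forall_adj_isBridge.mp hac) ((mem_edgeSet _).mp heG))
      have hnr : ¬ (fromEdgeSet (↑B : Set (Sym2 V))).Reachable u v :=
        fun h => hbr (h.mono hKle)
      have hkey := card_comps_sup_edge hne hnr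
      have hins : fromEdgeSet (↑(insert s(u,v) B) : Set (Sym2 V))
          = fromEdgeSet (↑B : Set (Sym2 V)) ⊔ edge u v := by
        rw [Finset.coe_insert, Set.insert_eq, fromEdgeSet_union, sup_comm]
        rfl
      rw [hins, Finset.card_insert_of_notMem he]
      omega


open SimpleGraph in
lemma sum_card_supp {V : Type*} [Fintype V] (H : SimpleGraph V)
    [Fintype H.ConnectedComponent] :
    ∑ c : H.ConnectedComponent, Nat.card c.supp = Fintype.card V := by
  classical
  have h := Finset.card_eq_sum_card_fiberwise
      (f := H.connectedComponentMk) (s := Finset.univ) (t := Finset.univ)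
      (fun x _ => Finset.mem_univ _)
  rw [Finset.card_univ] at h
  rw [h]
  refine Finset.sum_congr rfl fun c _ => ?_
  rw [Nat.card_coe_set_eq, Set.ncard_eq_toFinset_card']
  congr 1
  ext x
  simp [ConnectedComponent.mem_supp_iff]

def SignOK (P : MvPolynomial (ℕ × ℕ) ℚ) : Prop :=
  ∀ μ : (ℕ × ℕ) →₀ ℕ, 0 ≤ (-1 : ℚ) ^ (μ (1, 0)) * P.coeff μ

lemma signOK_one : SignOK 1 := by
  intro μ
  rw [MvPolynomial.coeff_one]
  split_ifs with h
  · rw [← h]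
    simp
  · simp

lemma signOK_sum {ι : Type*} {s : Finset ι} {f : ι → MvPolynomial (ℕ × ℕ) ℚ}
    (h : ∀ i ∈ s, SignOK (f i)) : SignOK (∑ i ∈ s, f i) := by
  intro μ
  rw [MvPolynomial.coeff_sum, Finset.mul_sum]
  exact Finset.sum_nonneg fun i hi => h i hi μ

lemma signOK_mul {p q : MvPolynomial (ℕ × ℕ) ℚ} (hp : SignOK p) (hq : SignOK q) :
    SignOK (p * q) := by
  intro μ
  rw [MvPolynomial.coeff_mul, Finset.mul_sum]
  refine Finset.sum_nonneg ?_
  rintro ⟨a, b⟩ hab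
  have hab' : a + b = μ := Finset.HasAntidiagonal.mem_antidiagonal.mp hab
  have : μ (1, 0) = a (1, 0) + b (1, 0) := by rw [← hab']; rfl
  rw [this, pow_add]
  have := mul_nonneg (hp a) (hq b)
  calc (0:ℚ) ≤ (-1) ^ a (1, 0) * p.coeff a * ((-1) ^ b (1, 0) * q.coeff b) := this
    _ = (-1) ^ a (1, 0) * (-1) ^ b (1, 0) * (p.coeff a * q.coeff b) := by ring

lemma signOK_prod {ι : Type*} (s : Finset ι) (f : ι → MvPolynomial (ℕ × ℕ) ℚ)
    (h : ∀ i ∈ s, SignOK (f i)) : SignOK (∏ i ∈ s, f i) :=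
  Finset.prod_induction f SignOK (fun _ _ => signOK_mul) signOK_one h

lemma X_mul_X_pow_eq (a b : ℕ × ℕ) (i : ℕ) :
    (X a * X b ^ i : MvPolynomial (ℕ × ℕ) ℚ)
      = monomial (Finsupp.single a 1 + Finsupp.single b i) 1 := by
  rw [X_pow_eq_monomial, X, monomial_mul, one_mul]

lemma signOK_undot {w d : ℕ} (h : d + 2 ≤ w) : SignOK (undot (w, d)) := by
  have : undot (w, d) = ∑ i ∈ Finset.range (d + 1),
      ((-1 : ℚ) ^ i * (d.choose i : ℚ)) • (X (w - i, 0) * X (1, 0) ^ i) := rfl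
  rw [this]
  apply signOK_sum
  intro i hi
  rw [Finset.mem_range] at hi
  intro μ
  have hne : ((w - i : ℕ), (0 : ℕ)) ≠ ((1 : ℕ), (0 : ℕ)) := by
    intro hcon
    simp only [Prod.mk.injEq] at hcon
    omega
  rw [MvPolynomial.smul_eq_C_mul, MvPolynomial.coeff_C_mul, X_mul_X_pow_eq,
    MvPolynomial.coeff_monomial]
  split_ifs with hμ
  · have hval : μ (1, 0) = i := by
      rw [← hμ, Finsupp.add_apply, Finsupp.single_eq_of_ne' hne, Finsupp.single_eq_same,
        zero_add]
    rw [hval, mul_one]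
    have : (-1 : ℚ) ^ i * ((-1) ^ i * (d.choose i : ℚ)) = (d.choose i : ℚ) := by
      rw [← mul_assoc, ← mul_pow]
      norm_num
    rw [this]
    positivity
  · simp

lemma aeval_sgn_undot {w d : ℕ} (h : d + 2 ≤ w) :
    aeval (fun p : ℕ × ℕ => if p = (1, 0) then (-1 : ℚ) else 1) (undot (w, d))
      = 2 ^ d := by
  have hrfl : undot (w, d) = ∑ i ∈ Finset.range (d + 1),
      ((-1 : ℚ) ^ i * (d.choose i : ℚ)) • (X (w - i, 0) * X (1, 0) ^ i) := rfl
  rw [hrfl]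
  rw [show (aeval (fun p : ℕ × ℕ => if p = (1, 0) then (-1 : ℚ) else 1))
      (∑ i ∈ Finset.range (d + 1),
        ((-1 : ℚ) ^ i * (d.choose i : ℚ)) • (X (w - i, 0) * X (1, 0) ^ i))
    = ∑ i ∈ Finset.range (d + 1),
      (aeval (fun p : ℕ × ℕ => if p = (1, 0) then (-1 : ℚ) else 1))
        (((-1 : ℚ) ^ i * (d.choose i : ℚ)) • (X (w - i, 0) * X (1, 0) ^ i)) from map_sum _ _ _]
  have hterm : ∀ i ∈ Finset.range (d + 1),
      aeval (fun p : ℕ × ℕ => if p = (1, 0) then (-1 : ℚ) else 1)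
        (((-1 : ℚ) ^ i * (d.choose i : ℚ)) •
          (X ((w - i : ℕ), (0 : ℕ)) * X ((1 : ℕ), (0 : ℕ)) ^ i : MvPolynomial (ℕ × ℕ) ℚ))
      = (d.choose i : ℚ) := by
    intro i hi
    rw [Finset.mem_range] at hi
    have hne : ((w - i : ℕ), (0 : ℕ)) ≠ ((1 : ℕ), (0 : ℕ)) := by
      intro hcon
      simp only [Prod.mk.injEq] at hcon
      omega
    rw [MvPolynomial.smul_eq_C_mul]
    simp only [map_mul, map_pow, aeval_X, aeval_C, Algebra.algebraMap_self_apply]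
    rw [if_neg hne, if_pos trivial]
    have hsq : (-1 : ℚ) ^ i * (-1) ^ i = 1 := by
      rw [← mul_pow]; norm_num
    calc ((-1 : ℚ) ^ i * (d.choose i : ℚ)) * (1 * (-1) ^ i)
        = ((-1 : ℚ) ^ i * (-1) ^ i) * (d.choose i : ℚ) := by ring
      _ = (d.choose i : ℚ) := by rw [hsq, one_mul]
  rw [Finset.sum_congr rfl hterm, ← Nat.cast_sum, Nat.sum_range_choose]
  push_cast
  ring

lemma comp_bound {V : Type*} [Fintype V] (H : SimpleGraph V) (m : V → ℕ × ℕ)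
    (hstrict : ∀ x, 1 < (m x).1) (c : H.ConnectedComponent) :
    1 ≤ Nat.card c.supp ∧ Nat.card c.supp + 1 ≤ ∑ᶠ x ∈ c.supp, (m x).1 := by
  classical
  have hfin : c.supp.Finite := Set.toFinite _
  obtain ⟨x0, hx0⟩ := c.exists_rep
  have hx0' : x0 ∈ c.supp := hx0
  have hpos : 0 < hfin.toFinset.card :=
    Finset.card_pos.mpr ⟨x0, hfin.mem_toFinset.mpr hx0'⟩
  have hcard : Nat.card c.supp = hfin.toFinset.card := by
    rw [Nat.card_coe_set_eq, Set.ncard_eq_toFinset_card _ hfin]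
  have hsum : hfin.toFinset.card • 2 ≤ ∑ x ∈ hfin.toFinset, (m x).1 :=
    Finset.card_nsmul_le_sum _ _ _ (fun x _ => hstrict x)
  rw [smul_eq_mul] at hsum
  refine ⟨by omega, ?_⟩
  rw [finsum_mem_eq_finite_toFinset_sum _ hfin]
  omega


lemma sum_powerset_two {α : Type*} [DecidableEq α] (s : Finset α) :
    ∑ A ∈ s.powerset, (2 : ℚ) ^ A.card = 3 ^ s.card := by
  induction s using Finset.induction_on with
  | empty => simp
  | @insert a s ha ih =>
    rw [Finset.sum_powerset_insert ha]
    have h2 : ∑ t ∈ s.powerset, (2 : ℚ) ^ (insert a t).card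
        = 2 * ∑ t ∈ s.powerset, (2 : ℚ) ^ t.card := by
      rw [Finset.mul_sum]
      refine Finset.sum_congr rfl fun t ht => ?_
      rw [Finset.card_insert_of_notMem
        (fun hat => ha (Finset.mem_powerset.mp ht hat)), pow_succ]
      ring
    rw [h2, ih, Finset.card_insert_of_notMem ha, pow_succ]
    ring


/-- For a strictly weighted tree on `n` vertices (all marks `(w,0)` with
`w > 1`), the undotting substitution applied to the states-model expansion of
the `M`-polynomial yields an expression with `3^{n-1}` monomials counted with
multiplicity and no cancellations: the sum of the absolute values of the
coefficients of the resulting polynomial is `3^{n-1}`, and every monomial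
containing `z_{(1,0)}^ℓ` has sign `(-1)^ℓ`. -/
theorem Mpoly_undot_cancellationFree {V : Type*} [Fintype V] [DecidableEq V]
    (G : SimpleGraph V) [DecidableRel G.Adj] (hG : G.IsTree)
    (m : V → ℕ × ℕ) (hzero : ∀ x, (m x).2 = 0) (hstrict : ∀ x, 1 < (m x).1) :
    (∑ μ ∈ ((bind₁ undot) (Mpoly G m)).support,
        |((bind₁ undot) (Mpoly G m)).coeff μ|) = 3 ^ (Fintype.card V - 1) ∧
    ∀ μ ∈ ((bind₁ undot) (Mpoly G m)).support,
      0 < (-1 : ℚ) ^ (μ (1, 0)) * ((bind₁ undot) (Mpoly G m)).coeff μ := by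
  classical
  have hac : G.IsAcyclic := hG.2
  set P : MvPolynomial (ℕ × ℕ) ℚ := (bind₁ undot) (Mpoly G m) with hPdef
  have hsign : SignOK P := by
    rw [hPdef, Mpoly, map_sum]
    apply signOK_sum
    intro A hA
    haveI instA :
        Fintype (SimpleGraph.fromEdgeSet (↑A : Set (Sym2 V))).ConnectedComponent :=
      Fintype.ofFinite _
    rw [finprod_eq_prod_of_fintype, map_prod]
    apply signOK_prod
    intro c _
    rw [bind₁_X_right]
    obtain ⟨hk, hw⟩ := comp_bound _ m hstrict c
    have h2 : (∑ᶠ x ∈ c.supp, (m x).2) = 0 := by simp [hzero]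
    rw [h2, zero_add]
    exact signOK_undot (by omega)
  have heval : (aeval (fun p : ℕ × ℕ => if p = (1, 0) then (-1 : ℚ) else 1)) P
      = 3 ^ (Fintype.card V - 1) := by
    rw [hPdef, aeval_bind₁, Mpoly, map_sum]
    have htrans : ∑ A ∈ G.edgeFinset.powerset, (2 : ℚ) ^ A.card
        = 3 ^ (Fintype.card V - 1) := by
      have hn : G.edgeFinset.card = Fintype.card V - 1 := by
        have := hG.card_edgeFinset
        omega
      rw [sum_powerset_two, hn]
    rw [← htrans]
    refine Finset.sum_congr rfl ?_
    intro A hA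
    ·
      haveI instA :
          Fintype (SimpleGraph.fromEdgeSet (↑A : Set (Sym2 V))).ConnectedComponent :=
        Fintype.ofFinite _
      rw [finprod_eq_prod_of_fintype, map_prod]
      have hfac : ∀ c : (SimpleGraph.fromEdgeSet (↑A : Set (Sym2 V))).ConnectedComponent,
          (aeval fun p : ℕ × ℕ =>
            (aeval fun q : ℕ × ℕ => if q = (1, 0) then (-1 : ℚ) else 1) (undot p))
            (X ((∑ᶠ x ∈ c.supp, (m x).1),
              (∑ᶠ x ∈ c.supp, (m x).2) + (Nat.card c.supp - 1))
              : MvPolynomial (ℕ × ℕ) ℚ)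
          = (2 : ℚ) ^ (Nat.card c.supp - 1) := by
        intro c
        obtain ⟨hk, hw⟩ := comp_bound _ m hstrict c
        have h2 : (∑ᶠ x ∈ c.supp, (m x).2) = 0 := by simp [hzero]
        rw [aeval_X, h2, zero_add]
        exact aeval_sgn_undot (by omega)
      rw [Finset.prod_congr rfl (fun c _ => hfac c), Finset.prod_pow_eq_pow_sum]
      show (2 : ℚ) ^ _ = (2 : ℚ) ^ A.card
      congr 1
      have hsubA : (↑A : Set (Sym2 V)) ⊆ G.edgeSet := fun e heA =>
        SimpleGraph.mem_edgeFinset.mp (Finset.mem_powerset.mp hA (Finset.mem_coe.mp heA))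
      have hL := forest_card hac A hsubA
      have hPt := sum_card_supp (SimpleGraph.fromEdgeSet (↑A : Set (Sym2 V)))
      have hone : ∀ c : (SimpleGraph.fromEdgeSet (↑A : Set (Sym2 V))).ConnectedComponent,
          1 ≤ Nat.card c.supp := fun c => (comp_bound _ m hstrict c).1
      have hsplit : ∑ c : (SimpleGraph.fromEdgeSet (↑A : Set (Sym2 V))).ConnectedComponent,
          Nat.card c.supp
          = (∑ c : (SimpleGraph.fromEdgeSet (↑A : Set (Sym2 V))).ConnectedComponent,
              (Nat.card c.supp - 1))
            + Fintype.card (SimpleGraph.fromEdgeSet (↑A : Set (Sym2 V))).ConnectedComponent := by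
        calc ∑ c : (SimpleGraph.fromEdgeSet (↑A : Set (Sym2 V))).ConnectedComponent,
              Nat.card c.supp
            = ∑ c : (SimpleGraph.fromEdgeSet (↑A : Set (Sym2 V))).ConnectedComponent,
              ((Nat.card c.supp - 1) + 1) :=
              Finset.sum_congr rfl (fun c _ => by have := hone c; omega)
          _ = (∑ c : (SimpleGraph.fromEdgeSet (↑A : Set (Sym2 V))).ConnectedComponent,
              (Nat.card c.supp - 1)) + ∑ _c : (SimpleGraph.fromEdgeSet
                (↑A : Set (Sym2 V))).ConnectedComponent, 1 := Finset.sum_add_distrib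
          _ = _ := by rw [Finset.sum_const, Finset.card_univ, smul_eq_mul, mul_one]
      have hNc : Nat.card (SimpleGraph.fromEdgeSet (↑A : Set (Sym2 V))).ConnectedComponent
          = Fintype.card (SimpleGraph.fromEdgeSet (↑A : Set (Sym2 V))).ConnectedComponent :=
        Nat.card_eq_fintype_card
      omega
  have part2 : ∀ μ ∈ P.support, 0 < (-1 : ℚ) ^ (μ (1, 0)) * P.coeff μ := by
    intro μ hμ
    have h0 := hsign μ
    have hne : P.coeff μ ≠ 0 := MvPolynomial.mem_support_iff.mp hμ
    exact lt_of_le_of_ne h0 (Ne.symm (mul_ne_zero (pow_ne_zero _ (by norm_num)) hne))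
  refine ⟨?_, part2⟩
  have habs : ∑ μ ∈ P.support, |P.coeff μ|
      = ∑ μ ∈ P.support, (-1 : ℚ) ^ (μ (1, 0)) * P.coeff μ :=
    Finset.sum_congr rfl fun μ hμ => by
      have h0 := hsign μ
      calc |P.coeff μ| = |(-1 : ℚ) ^ (μ (1, 0)) * P.coeff μ| := by
            rw [abs_mul, abs_pow, abs_neg, abs_one, one_pow, one_mul]
        _ = (-1 : ℚ) ^ (μ (1, 0)) * P.coeff μ := abs_of_nonneg h0
  have hev2 : (aeval (fun p : ℕ × ℕ => if p = (1, 0) then (-1 : ℚ) else 1)) P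
      = ∑ μ ∈ P.support, (-1 : ℚ) ^ (μ (1, 0)) * P.coeff μ := by
    rw [aeval_def, eval₂_eq]
    refine Finset.sum_congr rfl fun μ hμ => ?_
    have hprod : (∏ p ∈ μ.support,
        (if p = ((1 : ℕ), (0 : ℕ)) then (-1 : ℚ) else 1) ^ μ p)
        = (-1 : ℚ) ^ (μ (1, 0)) := by
      rw [Finset.prod_eq_single ((1 : ℕ), (0 : ℕ))]
      · rw [if_pos rfl]
      · intro p _ hpne
        rw [if_neg hpne, one_pow]
      · intro hnotmem
        rw [Finsupp.notMem_support_iff.mp hnotmem, if_pos rfl, pow_zero]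
    rw [hprod]
    simp only [Algebra.algebraMap_self_apply]
    ring
  rw [habs, ← hev2, heval]
end
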